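/- Let (H,X) be a conjunctive query with ∅ ⊊ X ⊊ V(H), H connected, and x₁ ∈ X adjacent to some vertex of V(H)∖X. Let ℓ be an odd positive integer, F = F_ℓ(H,X), and c = γ ∘ π₁. Then |cpAns((H,X),(χ(F,∅),c))| > |cpAns((H,X),(χ(F,{x₁}),c))|. -/

import Mathlib

/-- The canonical map `γ` from the vertices of the `ℓ`-copy `F_ℓ(H,X)` to the
vertices of `H`: each `x ∈ X` goes to itself, and each clone `(y,i)` goes to `y`. -/
def gammaMap {V : Type*} (X : Set V) (ℓ : ℕ) :
    (↥X ⊕ (↥(Xᶜ) × Fin ℓ)) → V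
  | Sum.inl x => ↑x
  | Sum.inr (y, _) => ↑y

/-- The copy index of a vertex of `F_ℓ(H,X)` (if any). -/
def copyIdx {V : Type*} (X : Set V) (ℓ : ℕ) :
    (↥X ⊕ (↥(Xᶜ) × Fin ℓ)) → Option (Fin ℓ)
  | Sum.inl _ => none
  | Sum.inr (_, i) => some i

/-- The `ℓ`-copy `F_ℓ(H,X)`: vertex set `X ∪ ((V(H)∖X) × [ℓ])`; two vertices are
adjacent iff their `γ`-images are adjacent in `H` and, when both lie in the cloned
part, their copy indices coincide.  (Edges within `X`, edges `{u,(v,i)}` for all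
indices `i`, and edges `{(u,i),(v,i)}` within each copy.) -/
def copyGraph {V : Type*} (H : SimpleGraph V) (X : Set V) (ℓ : ℕ) :
    SimpleGraph (↥X ⊕ (↥(Xᶜ) × Fin ℓ)) where
  Adj a b := H.Adj (gammaMap X ℓ a) (gammaMap X ℓ b) ∧
    ∀ i j, copyIdx X ℓ a = some i → copyIdx X ℓ b = some j → i = j
  symm := by
    constructor
    intro a b h
    exact ⟨h.1.symm, fun i j hi hj => (h.2 j i hj hi).symm⟩
  loopless := by
    constructor
    intro a h
    exact h.1.ne rfl

/-- The vertex type of the CFI graph `χ(F,W)`: pairs `(w,S)` with `S ⊆ N_F(w)` and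
`|S| ≡ |{w} ∩ W| (mod 2)`, i.e. `|S|` is odd iff `w ∈ W`. -/
def CFIVert {V : Type*} (F : SimpleGraph V) (W : Set V) : Type _ :=
  {p : V × Set V // p.2 ⊆ F.neighborSet p.1 ∧ (p.1 ∈ W ↔ Odd p.2.ncard)}

/-- The CFI graph `χ(F,W)`: `(w,S)` and `(w',S')` are adjacent iff `{w,w'} ∈ E(F)`
and `w' ∈ S ⟺ w ∈ S'`. -/
def CFI {V : Type*} (F : SimpleGraph V) (W : Set V) : SimpleGraph (CFIVert F W) where
  Adj a b := F.Adj a.1.1 b.1.1 ∧ (b.1.1 ∈ a.1.2 ↔ a.1.1 ∈ b.1.2)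
  symm := by
    constructor
    intro a b h
    exact ⟨h.1.symm, h.2.symm⟩
  loopless := by
    constructor
    intro a h
    exact h.1.ne rfl

/-- The set of colour-prescribed answers `cpAns((H,X),(χ(F_ℓ(H,X),W), γ∘π₁))`:
maps `a : X → V(χ(F_ℓ(H,X),W))` that extend to a homomorphism `h : H → χ(F_ℓ(H,X),W)`
with `γ(π₁(h(v))) = v` for every vertex `v` of `H`. -/
def cpAnsCFI {V : Type*} (H : SimpleGraph V) (X : Set V) (ℓ : ℕ)
    (W : Set (↥X ⊕ (↥(Xᶜ) × Fin ℓ))) :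
    Set (↥X → CFIVert (copyGraph H X ℓ) W) :=
  {a | ∃ h : H →g CFI (copyGraph H X ℓ) W,
    (∀ v : V, gammaMap X ℓ (h v).1.1 = v) ∧ ∀ x : ↥X, h ↑x = a x}


open Finset
namespace S18
attribute [local instance] Classical.propDecidable
set_option linter.unusedSectionVars false
set_option maxHeartbeats 1000000




lemma zmod2_cases (a : ZMod 2) : a = 0 ∨ a = 1 := by revert a; decide

lemma zmod2_ne_zero {a : ZMod 2} (h : a ≠ 0) : a = 1 := by
  rcases zmod2_cases a with h' | h' <;> simp_all

lemma zmod2_add_self (a : ZMod 2) : a + a = 0 := by revert a; decide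

/-- sign character on `ZMod 2`. -/
def sgn (a : ZMod 2) : ℤ := if a = 0 then 1 else -1

lemma sgn_add (a b : ZMod 2) : sgn (a + b) = sgn a * sgn b := by revert a b; decide

lemma sgn_zero : sgn 0 = 1 := rfl
lemma sgn_one : sgn 1 = -1 := rfl

lemma sgn_sum {ι : Type*} (s : Finset ι) (f : ι → ZMod 2) :
    sgn (∑ i ∈ s, f i) = ∏ i ∈ s, sgn (f i) := by
  induction s using Finset.cons_induction with
  | empty => simp [sgn_zero]
  | cons i s hi ih => rw [Finset.sum_cons, Finset.prod_cons, sgn_add, ih]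

lemma natCast_zmod2_eq_one_iff (n : ℕ) : ((n : ZMod 2) = 1) ↔ Odd n := by
  rw [← ZMod.natCast_mod n 2, Nat.odd_iff]
  rcases Nat.mod_two_eq_zero_or_one n with h | h <;> rw [h] <;>
    simp <;> decide

lemma natCast_zmod2_eq_zero_iff (n : ℕ) : ((n : ZMod 2) = 0) ↔ ¬ Odd n := by
  rw [← ZMod.natCast_mod n 2, Nat.odd_iff]
  rcases Nat.mod_two_eq_zero_or_one n with h | h <;> rw [h] <;>
    simp <;> decide

lemma ncard_cast_eq_sum {β : Type*} [Fintype β] (S : Set β) :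
    ((S.ncard : ℕ) : ZMod 2) = ∑ z : β, if z ∈ S then (1 : ZMod 2) else 0 := by
  classical
  have h1 : S.toFinset = univ.filter (fun z => z ∈ S) := by
    ext z; simp
  rw [Set.ncard_eq_toFinset_card' S, h1, Finset.card_filter, Nat.cast_sum]
  exact Finset.sum_congr rfl (fun z _ => by split <;> simp)

/-- parity of ncard via the coordinate sum -/
lemma odd_ncard_iff_sum {β : Type*} [Fintype β] (S : Set β) :
    Odd S.ncard ↔ (∑ z : β, if z ∈ S then (1 : ZMod 2) else 0) = 1 := by
  rw [← ncard_cast_eq_sum, natCast_zmod2_eq_one_iff]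

/-- character sums over "subgroups" are nonnegative -/
lemma char_sum_nonneg {M : Type*} [AddCommMonoid M] (s : Finset M)
    (hs : ∀ a ∈ s, ∀ b ∈ s, a + b ∈ s) (hM : ∀ a : M, a + a = 0)
    (φ : M → ZMod 2) (hφ : ∀ a b, φ (a + b) = φ a + φ b) :
    0 ≤ ∑ a ∈ s, sgn (φ a) := by
  by_cases h : ∀ a ∈ s, φ a = 0
  · have : ∑ a ∈ s, sgn (φ a) = ∑ a ∈ s, 1 := by
      refine Finset.sum_congr rfl (fun a ha => by rw [h a ha, sgn_zero])
    rw [this]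
    simp
  · push_neg at h
    obtain ⟨g₀, hg₀s, hg₀⟩ := h
    have key : ∑ a ∈ s, sgn (φ a) = ∑ a ∈ s, sgn (φ a + 1) := by
      refine Finset.sum_nbij' (fun a => a + g₀) (fun a => a + g₀) ?_ ?_ ?_ ?_ ?_
      · intro a ha; exact hs a ha g₀ hg₀s
      · intro a ha; exact hs a ha g₀ hg₀s
      · intro a _; show a + g₀ + g₀ = a; rw [add_assoc, hM, add_zero]
      · intro a _; show a + g₀ + g₀ = a; rw [add_assoc, hM, add_zero]
      · intro a _
        show sgn (φ a) = sgn (φ (a + g₀) + 1)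
        rw [hφ, zmod2_ne_zero hg₀, add_assoc]
        have h11 : (1 : ZMod 2) + 1 = 0 := by decide
        rw [h11, add_zero]
    have key2 : ∑ a ∈ s, sgn (φ a + 1) = - ∑ a ∈ s, sgn (φ a) := by
      rw [← Finset.sum_neg_distrib]
      refine Finset.sum_congr rfl (fun a _ => ?_)
      rw [sgn_add, sgn_one]; ring
    have : ∑ a ∈ s, sgn (φ a) = 0 := by
      have := key.trans key2
      linarith
    rw [this]

/-- symmetric off-diagonal sums vanish mod 2 -/
lemma sym_sum_zero {α : Type*} [Fintype α] (f : α → α → ZMod 2)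
    (hsym : ∀ u v, f u v = f v u) (hdiag : ∀ u, f u u = 0) :
    ∑ u : α, ∑ v : α, f u v = 0 := by
  classical
  have hstep : ∑ u : α, ∑ v : α, f u v = ∑ p : α × α, f p.1 p.2 :=
    (Fintype.sum_prod_type' _).symm
  rw [hstep]
  refine Finset.sum_involution (fun p _ => (p.2, p.1)) ?_ ?_ ?_ ?_
  · intro p _
    show f p.1 p.2 + f p.2 p.1 = 0
    rw [hsym p.2 p.1, zmod2_add_self]
  · intro p _ hf heq
    have h1 : p.2 = p.1 := congrArg Prod.fst heq
    exact hf ((congrArg (f p.1) h1).trans (hdiag p.1))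
  · intro p _; exact Finset.mem_univ _
  · intro p _; rfl


section parity
variable {α : Type*} [Fintype α] [DecidableEq α] (G : SimpleGraph α)

/-- indicator matrix of a single (undirected) edge -/
def stepM (a b : α) : α → α → ZMod 2 :=
  fun x y => (if x = a ∧ y = b then 1 else 0) + (if x = b ∧ y = a then 1 else 0)

omit [Fintype α] in
lemma stepM_sym (a b x y : α) : stepM a b x y = stepM a b y x := by
  unfold stepM
  rw [add_comm]
  congr 1
  · exact if_congr and_comm rfl rfl
  · exact if_congr and_comm rfl rfl

omit [Fintype α] in
lemma stepM_supp {a b x y : α} (h : stepM a b x y ≠ 0) :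
    (x = a ∧ y = b) ∨ (x = b ∧ y = a) := by
  unfold stepM at h
  by_cases h1 : x = a ∧ y = b
  · exact Or.inl h1
  · by_cases h2 : x = b ∧ y = a
    · exact Or.inr h2
    · exfalso; apply h; simp [h1, h2]

lemma stepM_row (a b : α) (x : α) :
    ∑ y : α, stepM a b x y =
      (if x = a then 1 else 0) + (if x = b then 1 else 0) := by
  unfold stepM
  rw [Finset.sum_add_distrib]
  congr 1
  · by_cases hx : x = a
    · simp only [hx, true_and]
      rw [Finset.sum_ite_eq' univ b (fun _ => (1 : ZMod 2))]
      simp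
    · simp [hx]
  · by_cases hx : x = b
    · simp only [hx, true_and]
      rw [Finset.sum_ite_eq' univ a (fun _ => (1 : ZMod 2))]
      simp
    · simp [hx]

/-- matrix of a walk (xor of its edge steps) -/
def walkM : ∀ {u v : α}, G.Walk u v → (α → α → ZMod 2)
  | _, _, SimpleGraph.Walk.nil => fun _ _ => 0
  | _, _, SimpleGraph.Walk.cons (u := a) (v := b) _ p => fun x y => stepM a b x y + walkM p x y

omit [Fintype α] in
lemma walkM_sym {u v : α} (p : G.Walk u v) (x y : α) : walkM G p x y = walkM G p y x := by
  induction p with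
  | nil => simp [walkM]
  | cons hadj p ih =>
    simp only [walkM]
    rw [stepM_sym, ih]

omit [Fintype α] in
lemma walkM_supp {u v : α} (p : G.Walk u v) (x y : α) (h : walkM G p x y ≠ 0) :
    G.Adj x y := by
  induction p with
  | nil => simp [walkM] at h
  | @cons a b c hadj p ih =>
    simp only [walkM] at h
    by_cases hs : stepM a b x y = 0
    · apply ih
      intro h0
      apply h
      rw [hs, h0, add_zero]
    · rcases stepM_supp hs with ⟨h1, h2⟩ | ⟨h1, h2⟩
      · rw [h1, h2]; exact hadj
      · rw [h1, h2]; exact hadj.symm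

lemma walkM_row {u v : α} (p : G.Walk u v) (x : α) :
    ∑ y : α, walkM G p x y = (if x = u then 1 else 0) + (if x = v then 1 else 0) := by
  induction p with
  | nil =>
    simp only [walkM]
    rw [Finset.sum_const_zero]
    by_cases hx : x = u <;> simp [hx, zmod2_add_self]
  | @cons a b c hadj p ih =>
    simp only [walkM]
    rw [Finset.sum_add_distrib, ih, stepM_row]
    have : ∀ r s t : ZMod 2, r + s + (s + t) = r + t := by decide
    exact this _ _ _

/-- Lemma B: prescribed degree parities with zero sum on each component are realizable. -/
lemma exists_eps (r : α → ZMod 2)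
    (hr : ∀ C : G.ConnectedComponent,
      ∑ v ∈ univ.filter (fun v => G.connectedComponentMk v = C), r v = 0) :
    ∃ ε : α → α → ZMod 2, (∀ a b, ε a b = ε b a) ∧ (∀ a b, ε a b ≠ 0 → G.Adj a b) ∧
      (∀ a, ∑ b : α, ε a b = r a) := by
  suffices h : ∀ n (r : α → ZMod 2), (univ.filter (fun v => r v = 1)).card = n →
      (∀ C : G.ConnectedComponent,
        ∑ v ∈ univ.filter (fun v => G.connectedComponentMk v = C), r v = 0) →
      ∃ ε : α → α → ZMod 2, (∀ a b, ε a b = ε b a) ∧ (∀ a b, ε a b ≠ 0 → G.Adj a b) ∧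
        (∀ a, ∑ b : α, ε a b = r a) by
    exact h _ r rfl hr
  intro n
  induction n using Nat.strong_induction_on with
  | _ n ih =>
    intro r hcard hr
    rcases Nat.eq_zero_or_pos n with hn | hn
    · -- all zero
      refine ⟨fun _ _ => 0, fun _ _ => rfl, fun a b h => absurd rfl h, fun a => ?_⟩
      have hemp : univ.filter (fun v => r v = 1) = ∅ :=
        Finset.card_eq_zero.mp (by rw [hcard]; exact hn)
      have hra : r a = 0 := by
        by_contra hne
        have hmem : a ∈ univ.filter (fun v => r v = 1) := by
          simp [zmod2_ne_zero hne]
        rw [hemp] at hmem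
        exact absurd hmem (Finset.notMem_empty a)
      rw [hra]; simp
    · -- pick v₀
      have hne : (univ.filter (fun v => r v = 1)).Nonempty := by
        rw [← Finset.card_pos, hcard]; exact hn
      obtain ⟨v₀, hv₀⟩ := hne
      have hrv₀ : r v₀ = 1 := (Finset.mem_filter.mp hv₀).2
      -- find a second odd vertex in the same component
      have hv₁ : ∃ v₁, v₁ ≠ v₀ ∧
          G.connectedComponentMk v₁ = G.connectedComponentMk v₀ ∧ r v₁ = 1 := by
        by_contra hno
        push_neg at hno
        have hsum := hr (G.connectedComponentMk v₀)
        have heq : ∑ v ∈ univ.filter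
            (fun v => G.connectedComponentMk v = G.connectedComponentMk v₀), r v = r v₀ := by
          refine Finset.sum_eq_single_of_mem v₀
            (Finset.mem_filter.mpr ⟨Finset.mem_univ _, rfl⟩) ?_
          intro b hb hbne
          rcases zmod2_cases (r b) with h' | h'
          · exact h'
          · exact absurd h' (hno b hbne (Finset.mem_filter.mp hb).2)
        rw [heq, hrv₀] at hsum
        exact one_ne_zero hsum
      obtain ⟨v₁, hv₁ne, hv₁C, hrv₁⟩ := hv₁
      have hreach : G.Reachable v₀ v₁ :=
        (SimpleGraph.ConnectedComponent.exact hv₁C).symm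
      obtain ⟨w⟩ := hreach
      set r' := fun v => r v + ((if v = v₀ then 1 else 0) + if v = v₁ then (1 : ZMod 2) else 0)
        with hr'
      have hr'v : ∀ v, v ≠ v₀ → v ≠ v₁ → r' v = r v := by
        intro v h0 h1; simp [hr', h0, h1]
      have hr'v₀ : r' v₀ = 0 := by
        show r v₀ + ((if v₀ = v₀ then 1 else 0) + if v₀ = v₁ then (1 : ZMod 2) else 0) = 0
        rw [hrv₀, if_pos rfl, if_neg (Ne.symm hv₁ne)]
        decide
      have hr'v₁ : r' v₁ = 0 := by
        show r v₁ + ((if v₁ = v₀ then 1 else 0) + if v₁ = v₁ then (1 : ZMod 2) else 0) = 0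
        rw [hrv₁, if_pos rfl, if_neg hv₁ne]
        decide
      have hfilt : univ.filter (fun v => r' v = 1) =
          ((univ.filter (fun v => r v = 1)).erase v₀).erase v₁ := by
        ext v
        simp only [Finset.mem_filter, Finset.mem_erase, Finset.mem_univ, true_and]
        constructor
        · intro hv
          have h0 : v ≠ v₀ := by intro h; rw [h, hr'v₀] at hv; exact zero_ne_one hv
          have h1 : v ≠ v₁ := by intro h; rw [h, hr'v₁] at hv; exact zero_ne_one hv
          exact ⟨h1, h0, by rw [← hr'v v h0 h1]; exact hv⟩
        · rintro ⟨h1, h0, hv⟩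
          rw [hr'v v h0 h1]; exact hv
      have hv₁mem : v₁ ∈ (univ.filter (fun v => r v = 1)).erase v₀ :=
        Finset.mem_erase.mpr ⟨hv₁ne, Finset.mem_filter.mpr ⟨Finset.mem_univ _, hrv₁⟩⟩
      have hcard' : (univ.filter (fun v => r' v = 1)).card = n - 2 := by
        rw [hfilt, Finset.card_erase_of_mem hv₁mem, Finset.card_erase_of_mem hv₀, hcard]
        omega
      have hn2 : n - 2 < n := by omega
      have hr'comp : ∀ C : G.ConnectedComponent,
          ∑ v ∈ univ.filter (fun v => G.connectedComponentMk v = C), r' v = 0 := by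
        intro C
        have hsplit : ∑ v ∈ univ.filter (fun v => G.connectedComponentMk v = C), r' v =
            (∑ v ∈ univ.filter (fun v => G.connectedComponentMk v = C), r v) +
            ((if v₀ ∈ univ.filter (fun v => G.connectedComponentMk v = C) then (1:ZMod 2) else 0) +
             (if v₁ ∈ univ.filter (fun v => G.connectedComponentMk v = C) then (1:ZMod 2) else 0)) := by
          rw [Finset.sum_add_distrib, Finset.sum_add_distrib]
          congr 1
          congr 1
          · exact Finset.sum_ite_eq' _ v₀ (fun _ => (1 : ZMod 2))
          · exact Finset.sum_ite_eq' _ v₁ (fun _ => (1 : ZMod 2))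
        rw [hsplit, hr C]
        have hmem : (v₀ ∈ univ.filter (fun v => G.connectedComponentMk v = C)) ↔
            (v₁ ∈ univ.filter (fun v => G.connectedComponentMk v = C)) := by
          simp only [Finset.mem_filter, Finset.mem_univ, true_and]
          rw [hv₁C]
        by_cases hC : v₀ ∈ univ.filter (fun v => G.connectedComponentMk v = C)
        · rw [if_pos hC, if_pos (hmem.mp hC)]; decide
        · rw [if_neg hC, if_neg (fun h => hC (hmem.mpr h))]; decide
      obtain ⟨ε', hsym', hsupp', hrow'⟩ := ih (n-2) hn2 r' hcard' hr'comp
      refine ⟨fun a b => ε' a b + walkM G w a b, ?_, ?_, ?_⟩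
      · intro a b
        show ε' a b + walkM G w a b = ε' b a + walkM G w b a
        rw [hsym' a b, walkM_sym]
      · intro a b h
        have h' : ε' a b + walkM G w a b ≠ 0 := h
        by_cases h1 : ε' a b = 0
        · have h2 : walkM G w a b ≠ 0 := by
            intro h0; apply h'; rw [h1, h0, add_zero]
          exact walkM_supp G w a b h2
        · exact hsupp' a b h1
      · intro a
        show ∑ b : α, (ε' a b + walkM G w a b) = r a
        rw [Finset.sum_add_distrib, hrow' a, walkM_row]
        show r a + ((if a = v₀ then 1 else 0) + if a = v₁ then (1:ZMod 2) else 0) +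
          ((if a = v₀ then 1 else 0) + if a = v₁ then (1:ZMod 2) else 0) = r a
        have h3 : ∀ p q : ZMod 2, p + q + q = p := by decide
        exact h3 _ _
end parity

section main
variable {V : Type*} [Fintype V] [DecidableEq V] (H : SimpleGraph V) (X : Set V) (ℓ : ℕ)

abbrev Gout : SimpleGraph ↥(Xᶜ) := SimpleGraph.comap (Subtype.val) H

noncomputable abbrev cmp (v : ↥(Xᶜ)) : (Gout H X).ConnectedComponent :=
  (Gout H X).connectedComponentMk v

abbrev Aspace := ↥X → ↥X → ZMod 2
abbrev Bspace := ↥X → ↥(Xᶜ) → Fin ℓ → ZMod 2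

variable {X ℓ} in
def SuppB (t : Bspace X ℓ) : Prop :=
  ∀ (x : ↥X) (v : ↥(Xᶜ)) (j : Fin ℓ), ¬ H.Adj ↑x ↑v → t x v j = 0
variable {ℓ} in
noncomputable def dCsum (t : Bspace X ℓ) (C : (Gout H X).ConnectedComponent) (j : Fin ℓ) : ZMod 2 :=
  ∑ x : ↥X, ∑ v : ↥(Xᶜ), if cmp H X v = C then t x v j else 0
variable {X ℓ} in
noncomputable def parB (t : Bspace X ℓ) (x : ↥X) : ZMod 2 := ∑ v, ∑ j, t x v j
variable {X ℓ} in
noncomputable def Bsig (ε : Finset ↥X) (t : Bspace X ℓ) : ZMod 2 := ∑ x ∈ ε, parB t x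

/-- B-profiles supported on component `C` -/
noncomputable def FullC (C : (Gout H X).ConnectedComponent) : Finset (Bspace X ℓ) :=
  univ.filter (fun t => SuppB H t ∧ ∀ (x : ↥X) (v : ↥(Xᶜ)) (j : Fin ℓ), cmp H X v ≠ C → t x v j = 0)

noncomputable def TsetC (C : (Gout H X).ConnectedComponent) : Finset (Bspace X ℓ) :=
  (FullC H X ℓ C).filter (fun t => ∃ j, dCsum H X t C j = 0)

noncomputable def BadC (C : (Gout H X).ConnectedComponent) : Finset (Bspace X ℓ) :=
  (FullC H X ℓ C).filter (fun t => ¬ ∃ j, dCsum H X t C j = 0)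

noncomputable def wComp (C : (Gout H X).ConnectedComponent) (ε : Finset ↥X) : ℤ :=
  ∑ t ∈ TsetC H X ℓ C, sgn (Bsig ε t)

variable {H X ℓ}

lemma parB_add (t t' : Bspace X ℓ) (x : ↥X) : parB (t + t') x = parB t x + parB t' x := by
  unfold parB
  rw [← Finset.sum_add_distrib]
  refine Finset.sum_congr rfl (fun v _ => ?_)
  rw [← Finset.sum_add_distrib]
  rfl

lemma Bsig_add (ε : Finset ↥X) (t t' : Bspace X ℓ) :
    Bsig ε (t + t') = Bsig ε t + Bsig ε t' := by
  unfold Bsig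
  rw [← Finset.sum_add_distrib]
  exact Finset.sum_congr rfl (fun x _ => parB_add t t' x)

lemma dCsum_add (t t' : Bspace X ℓ) (C) (j) :
    dCsum H X (t + t') C j = dCsum H X t C j + dCsum H X t' C j := by
  unfold dCsum
  rw [← Finset.sum_add_distrib]
  refine Finset.sum_congr rfl (fun x _ => ?_)
  rw [← Finset.sum_add_distrib]
  refine Finset.sum_congr rfl (fun v _ => ?_)
  by_cases h : cmp H X v = C <;> simp [h]

lemma dCsum_congr {t t' : Bspace X ℓ} {C} (h : ∀ x v j, cmp H X v = C → t x v j = t' x v j)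
    (j : Fin ℓ) : dCsum H X t C j = dCsum H X t' C j := by
  unfold dCsum
  refine Finset.sum_congr rfl (fun x _ => Finset.sum_congr rfl (fun v _ => ?_))
  by_cases hv : cmp H X v = C
  · rw [if_pos hv, if_pos hv, h x v j hv]
  · rw [if_neg hv, if_neg hv]

/-- sum of all slice sums equals the signed weight when all boundary vertices lie in ε -/
lemma Bsig_eq_sum_dC {C} {ε : Finset ↥X}
    (hall : ∀ (x : ↥X) (v : ↥(Xᶜ)), H.Adj ↑x ↑v → cmp H X v = C → x ∈ ε)
    {t : Bspace X ℓ} (ht : t ∈ FullC H X ℓ C) :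
    Bsig ε t = ∑ j : Fin ℓ, dCsum H X t C j := by
  obtain ⟨hsupp, hsc⟩ := (Finset.mem_filter.mp ht).2
  have hzero : ∀ x : ↥X, x ∉ ε → parB t x = 0 := by
    intro x hx
    unfold parB
    refine Finset.sum_eq_zero (fun v _ => Finset.sum_eq_zero (fun j _ => ?_))
    by_cases ha : H.Adj ↑x ↑v
    · by_cases hc : cmp H X v = C
      · exact absurd (hall x v ha hc) hx
      · exact hsc x v j hc
    · exact hsupp x v j ha
  have h1 : Bsig ε t = ∑ x : ↥X, parB t x := by
    unfold Bsig
    exact Finset.sum_subset (Finset.subset_univ ε) (fun x _ hx => hzero x hx)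
  rw [h1]
  have h2 : ∀ (x : ↥X) (v : ↥(Xᶜ)), (∑ j, t x v j) = ∑ j, if cmp H X v = C then t x v j else 0 := by
    intro x v
    refine Finset.sum_congr rfl (fun j _ => ?_)
    by_cases hc : cmp H X v = C
    · rw [if_pos hc]
    · rw [if_neg hc, hsc x v j hc]
  unfold parB dCsum
  calc ∑ x : ↥X, ∑ v, ∑ j, t x v j
      = ∑ x : ↥X, ∑ v, ∑ j, if cmp H X v = C then t x v j else 0 :=
        Finset.sum_congr rfl (fun x _ => Finset.sum_congr rfl (fun v _ => h2 x v))
    _ = ∑ x : ↥X, ∑ j, ∑ v, if cmp H X v = C then t x v j else 0 :=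
        Finset.sum_congr rfl (fun x _ => Finset.sum_comm)
    _ = ∑ j, ∑ x : ↥X, ∑ v, if cmp H X v = C then t x v j else 0 := Finset.sum_comm

lemma fullC_closed {C} : ∀ t ∈ FullC H X ℓ C, ∀ t' ∈ FullC H X ℓ C, t + t' ∈ FullC H X ℓ C := by
  intro t ht t' ht'
  obtain ⟨h1, h2⟩ := (Finset.mem_filter.mp ht).2
  obtain ⟨h1', h2'⟩ := (Finset.mem_filter.mp ht').2
  refine Finset.mem_filter.mpr ⟨Finset.mem_univ _, ⟨?_, ?_⟩⟩
  · intro x v j ha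
    show t x v j + t' x v j = 0
    rw [h1 x v j ha, h1' x v j ha, add_zero]
  · intro x v j hc
    show t x v j + t' x v j = 0
    rw [h2 x v j hc, h2' x v j hc, add_zero]

lemma bspace_add_self (t : Bspace X ℓ) : t + t = 0 := by
  funext x v j
  exact zmod2_add_self _


lemma Bsig_zero (ε : Finset ↥X) : Bsig ε (0 : Bspace X ℓ) = 0 := by
  unfold Bsig parB
  simp

lemma collapse_pair (x₀ : ↥X) (v₀ : ↥(Xᶜ)) (K : ZMod 2) :
    ∑ x : ↥X, ∑ v : ↥(Xᶜ), (if x = x₀ ∧ v = v₀ then K else 0) = K := by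
  have h1 : ∀ x : ↥X, (∑ v : ↥(Xᶜ), if x = x₀ ∧ v = v₀ then K else 0) =
      if x = x₀ then K else 0 := by
    intro x
    by_cases hx : x = x₀
    · simp only [hx, true_and]
      rw [Finset.sum_ite_eq' univ v₀ (fun _ => K)]
      simp
    · simp [hx]
  rw [Finset.sum_congr rfl (fun x _ => h1 x)]
  rw [Finset.sum_ite_eq' univ x₀ (fun _ => K)]
  simp

/-- dCsum of a one-pair all-slice indicator -/
lemma dCsum_pairInd (x₀ : ↥X) (v₀ : ↥(Xᶜ)) (C) (j : Fin ℓ) :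
    dCsum H X (fun x v _ => if x = x₀ ∧ v = v₀ then (1 : ZMod 2) else 0) C j
      = if cmp H X v₀ = C then 1 else 0 := by
  unfold dCsum
  have h1 : ∀ (x : ↥X) (v : ↥(Xᶜ)),
      (if cmp H X v = C then (if x = x₀ ∧ v = v₀ then (1:ZMod 2) else 0) else 0) =
      if x = x₀ ∧ v = v₀ then (if cmp H X v₀ = C then (1:ZMod 2) else 0) else 0 := by
    intro x v
    rcases eq_or_ne v v₀ with rfl | hv
    · by_cases hx : x = x₀ <;> by_cases hc : cmp H X v = C <;> simp [hx, hc]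
    · simp [hv]
  rw [Finset.sum_congr rfl (fun x _ => Finset.sum_congr rfl (fun v _ => h1 x v))]
  exact collapse_pair x₀ v₀ _

/-- dCsum of a one-entry indicator -/
lemma dCsum_singleInd (x₀ : ↥X) (v₀ : ↥(Xᶜ)) (j₀ : Fin ℓ) (C) (j : Fin ℓ) :
    dCsum H X (fun x v j => if x = x₀ ∧ v = v₀ ∧ j = j₀ then (1 : ZMod 2) else 0) C j
      = if cmp H X v₀ = C ∧ j = j₀ then 1 else 0 := by
  unfold dCsum
  have h1 : ∀ (x : ↥X) (v : ↥(Xᶜ)),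
      (if cmp H X v = C then (if x = x₀ ∧ v = v₀ ∧ j = j₀ then (1:ZMod 2) else 0) else 0) =
      if x = x₀ ∧ v = v₀ then (if cmp H X v₀ = C ∧ j = j₀ then (1:ZMod 2) else 0) else 0 := by
    intro x v
    rcases eq_or_ne v v₀ with rfl | hv
    · by_cases hx : x = x₀ <;> by_cases hj : j = j₀ <;> by_cases hc : cmp H X v = C <;>
        simp [hx, hj, hc]
    · simp [hv]
  rw [Finset.sum_congr rfl (fun x _ => Finset.sum_congr rfl (fun v _ => h1 x v))]
  exact collapse_pair x₀ v₀ _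

lemma parB_singleInd (x₀ : ↥X) (v₀ : ↥(Xᶜ)) (j₀ : Fin ℓ) (x : ↥X) :
    parB (fun x v j => if x = x₀ ∧ v = v₀ ∧ j = j₀ then (1 : ZMod 2) else 0) x
      = if x = x₀ then 1 else 0 := by
  unfold parB
  by_cases hx : x = x₀
  · simp only [hx, true_and]
    have h1 : ∀ v : ↥(Xᶜ), (∑ j, if v = v₀ ∧ j = j₀ then (1:ZMod 2) else 0) =
        if v = v₀ then 1 else 0 := by
      intro v
      by_cases hv : v = v₀
      · simp only [hv, true_and]
        rw [Finset.sum_ite_eq' univ j₀ (fun _ => (1:ZMod 2))]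
        simp
      · simp [hv]
    rw [Finset.sum_congr rfl (fun v _ => h1 v)]
    rw [Finset.sum_ite_eq' univ v₀ (fun _ => (1:ZMod 2))]
    simp
  · simp [hx]

lemma sum_split_TB (C) (ε : Finset ↥X) :
    ∑ t ∈ FullC H X ℓ C, sgn (Bsig ε t) =
      wComp H X ℓ C ε + ∑ t ∈ BadC H X ℓ C, sgn (Bsig ε t) := by
  unfold wComp TsetC BadC
  exact (Finset.sum_filter_add_sum_filter_not (FullC H X ℓ C) _ _).symm

lemma full_nonneg (C) (ε : Finset ↥X) : 0 ≤ ∑ t ∈ FullC H X ℓ C, sgn (Bsig ε t) :=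
  char_sum_nonneg _ fullC_closed bspace_add_self (Bsig ε) (Bsig_add ε)

lemma mem_BadC_iff {C} {t : Bspace X ℓ} :
    t ∈ BadC H X ℓ C ↔ t ∈ FullC H X ℓ C ∧ ¬ ∃ j, dCsum H X t C j = 0 := by
  unfold BadC
  rw [Finset.mem_filter]

/-- Case analysis on the boundary pairs of `C` relative to `ε`. -/
lemma wComp_cases (hodd : Odd ℓ) (hpos : 0 < ℓ) (C) (ε : Finset ↥X) :
    0 ≤ wComp H X ℓ C ε ∧
    ((∀ (x : ↥X) (v : ↥(Xᶜ)), H.Adj ↑x ↑v → cmp H X v = C → x ∈ ε) →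
      0 < wComp H X ℓ C ε) := by
  by_cases hOn : ∃ (x : ↥X) (v : ↥(Xᶜ)), H.Adj ↑x ↑v ∧ cmp H X v = C ∧ x ∈ ε
  · by_cases hOff : ∃ (x : ↥X) (v : ↥(Xᶜ)), H.Adj ↑x ↑v ∧ cmp H X v = C ∧ x ∉ ε
    · -- case A : mixed; Bad sum vanishes by an involution
      obtain ⟨xa, va, haa, hca, hxa⟩ := hOn
      obtain ⟨xb, vb, hab, hcb, hxb⟩ := hOff
      have hne : xa ≠ xb := fun h => hxb (h ▸ hxa)
      have hpairne : ∀ x v, (x ∈ ε) → ¬ (x = xb ∧ v = vb ∧ True) → True := fun _ _ _ _ => trivial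
      set j₀ : Fin ℓ := ⟨0, hpos⟩ with hj₀
      set τ : Bspace X ℓ := fun x v j =>
        (if x = xa ∧ v = va ∧ j = j₀ then 1 else 0) +
        (if x = xb ∧ v = vb ∧ j = j₀ then 1 else 0) with hτ
      have hτmem : τ ∈ FullC H X ℓ C := by
        refine Finset.mem_filter.mpr ⟨Finset.mem_univ _, ⟨?_, ?_⟩⟩
        · intro x v j ha
          show (if x = xa ∧ v = va ∧ j = j₀ then (1:ZMod 2) else 0) +
            (if x = xb ∧ v = vb ∧ j = j₀ then 1 else 0) = 0
          rw [if_neg, if_neg]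
          · simp
          · rintro ⟨h1, h2, h3⟩; rw [h1, h2] at ha; exact ha hab
          · rintro ⟨h1, h2, h3⟩; rw [h1, h2] at ha; exact ha haa
        · intro x v j hc
          show (if x = xa ∧ v = va ∧ j = j₀ then (1:ZMod 2) else 0) +
            (if x = xb ∧ v = vb ∧ j = j₀ then 1 else 0) = 0
          rw [if_neg, if_neg]
          · simp
          · rintro ⟨h1, h2, h3⟩; rw [h2] at hc; exact hc hcb
          · rintro ⟨h1, h2, h3⟩; rw [h2] at hc; exact hc hca
      have hτd : ∀ j, dCsum H X τ C j = 0 := by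
        intro j
        have hsplit : dCsum H X τ C j =
            dCsum H X (fun x v j => if x = xa ∧ v = va ∧ j = j₀ then (1:ZMod 2) else 0) C j +
            dCsum H X (fun x v j => if x = xb ∧ v = vb ∧ j = j₀ then (1:ZMod 2) else 0) C j := by
          rw [← dCsum_add]
          rfl
        rw [hsplit, dCsum_singleInd, dCsum_singleInd]
        by_cases hj : j = j₀
        · rw [if_pos ⟨hca, hj⟩, if_pos ⟨hcb, hj⟩]; decide
        · rw [if_neg (fun hh => hj hh.2), if_neg (fun hh => hj hh.2)]; decide
      have hτB : Bsig ε τ = 1 := by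
        have hsplit : Bsig ε τ =
            Bsig ε (fun x v j => if x = xa ∧ v = va ∧ j = j₀ then (1:ZMod 2) else 0) +
            Bsig ε (fun x v j => if x = xb ∧ v = vb ∧ j = j₀ then (1:ZMod 2) else 0) := by
          rw [← Bsig_add]
          rfl
        rw [hsplit]
        unfold Bsig
        rw [Finset.sum_congr rfl (fun x _ => parB_singleInd xa va j₀ x),
          Finset.sum_congr rfl (fun x _ => parB_singleInd xb vb j₀ x),
          Finset.sum_ite_eq' ε xa (fun _ => (1:ZMod 2)),
          Finset.sum_ite_eq' ε xb (fun _ => (1:ZMod 2)),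
          if_pos hxa, if_neg hxb, add_zero]
      have hBadmem : ∀ t ∈ BadC H X ℓ C, t + τ ∈ BadC H X ℓ C := by
        intro t ht
        obtain ⟨htf, htb⟩ := mem_BadC_iff.mp ht
        refine mem_BadC_iff.mpr ⟨fullC_closed t htf τ hτmem, ?_⟩
        rintro ⟨j, hj⟩
        rw [dCsum_add, hτd j, add_zero] at hj
        exact htb ⟨j, hj⟩
      have hbad : ∑ t ∈ BadC H X ℓ C, sgn (Bsig ε t) = 0 := by
        refine Finset.sum_involution (fun t _ => t + τ) ?_ ?_ hBadmem ?_
        · intro t _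
          rw [Bsig_add, hτB, sgn_add, sgn_one]
          ring
        · intro t _ _ heq
          have h1 := congrFun (congrFun (congrFun heq xa) va) j₀
          have hτv : τ xa va j₀ = 1 := by
            show (if xa = xa ∧ va = va ∧ j₀ = j₀ then (1:ZMod 2) else 0) +
              (if xa = xb ∧ va = vb ∧ j₀ = j₀ then 1 else 0) = 1
            rw [if_pos ⟨rfl, rfl, rfl⟩, if_neg (fun hh => hne hh.1)]
            decide
          have h2 : t xa va j₀ + τ xa va j₀ = t xa va j₀ := h1
          rw [hτv] at h2
          exact one_ne_zero (add_eq_left.mp h2)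
        · intro t _
          show t + τ + τ = t
          rw [add_assoc, bspace_add_self τ, add_zero]
      have hw : wComp H X ℓ C ε = ∑ t ∈ FullC H X ℓ C, sgn (Bsig ε t) := by
        rw [sum_split_TB, hbad, add_zero]
      constructor
      · rw [hw]; exact full_nonneg C ε
      · intro hall
        exact absurd (hall xb vb hab hcb) hxb
    · -- case B : all boundary pairs in ε
      push_neg at hOff
      have hall : ∀ (x : ↥X) (v : ↥(Xᶜ)), H.Adj ↑x ↑v → cmp H X v = C → x ∈ ε := by
        intro x v ha hc
        exact hOff x v ha hc
      have hBsig1 : ∀ t ∈ BadC H X ℓ C, Bsig ε t = 1 := by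
        intro t ht
        obtain ⟨htf, htb⟩ := mem_BadC_iff.mp ht
        rw [Bsig_eq_sum_dC hall htf]
        push_neg at htb
        have hone : ∀ j : Fin ℓ, dCsum H X t C j = 1 := fun j => zmod2_ne_zero (htb j)
        rw [Finset.sum_congr rfl (fun j _ => hone j)]
        rw [Finset.sum_const]
        simp only [Finset.card_univ, Fintype.card_fin, nsmul_eq_mul, mul_one]
        exact (natCast_zmod2_eq_one_iff ℓ).mpr hodd
      have hbad : ∑ t ∈ BadC H X ℓ C, sgn (Bsig ε t) = - (BadC H X ℓ C).card := by
        rw [Finset.sum_congr rfl (fun t ht => by rw [hBsig1 t ht, sgn_one])]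
        rw [Finset.sum_const]
        simp
      have hw : wComp H X ℓ C ε =
          (∑ t ∈ FullC H X ℓ C, sgn (Bsig ε t)) + (BadC H X ℓ C).card := by
        have := sum_split_TB (H := H) (X := X) (ℓ := ℓ) C ε
        rw [hbad] at this
        linarith
      -- witness in BadC
      obtain ⟨xa, va, haa, hca, hxa⟩ := hOn
      have hwit : (fun x v (_ : Fin ℓ) => if x = xa ∧ v = va then (1:ZMod 2) else 0) ∈
          BadC H X ℓ C := by
        refine mem_BadC_iff.mpr ⟨?_, ?_⟩
        · refine Finset.mem_filter.mpr ⟨Finset.mem_univ _, ⟨?_, ?_⟩⟩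
          · intro x v j ha
            show (if x = xa ∧ v = va then (1:ZMod 2) else 0) = 0
            rw [if_neg]
            rintro ⟨h1, h2⟩; rw [h1, h2] at ha; exact ha haa
          · intro x v j hc
            show (if x = xa ∧ v = va then (1:ZMod 2) else 0) = 0
            rw [if_neg]
            rintro ⟨h1, h2⟩; rw [h2] at hc; exact hc hca
        · rintro ⟨j, hj⟩
          rw [dCsum_pairInd, if_pos hca] at hj
          exact one_ne_zero hj
      have hcardpos : 0 < (BadC H X ℓ C).card :=
        Finset.card_pos.mpr ⟨_, hwit⟩
      constructor
      · rw [hw]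
        have := full_nonneg (H := H) (X := X) (ℓ := ℓ) C ε
        positivity
      · intro _
        rw [hw]
        have h1 := full_nonneg (H := H) (X := X) (ℓ := ℓ) C ε
        have h2 : (0:ℤ) < (BadC H X ℓ C).card := by exact_mod_cast hcardpos
        linarith
  · -- case C : no boundary pair touches ε
    have hBsig0 : ∀ t ∈ FullC H X ℓ C, Bsig ε t = 0 := by
      intro t ht
      obtain ⟨hsupp, hsc⟩ := (Finset.mem_filter.mp ht).2
      unfold Bsig
      refine Finset.sum_eq_zero (fun x hx => ?_)
      unfold parB
      refine Finset.sum_eq_zero (fun v _ => Finset.sum_eq_zero (fun j _ => ?_))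
      by_cases ha : H.Adj ↑x ↑v
      · by_cases hc : cmp H X v = C
        · exact absurd ⟨x, v, ha, hc, hx⟩ hOn
        · exact hsc x v j hc
      · exact hsupp x v j ha
    have hfull : ∑ t ∈ FullC H X ℓ C, sgn (Bsig ε t) = (FullC H X ℓ C).card := by
      rw [Finset.sum_congr rfl (fun t ht => by rw [hBsig0 t ht, sgn_zero])]
      rw [Finset.sum_const]
      simp
    have hbad : ∑ t ∈ BadC H X ℓ C, sgn (Bsig ε t) = (BadC H X ℓ C).card := by
      rw [Finset.sum_congr rfl
        (fun t ht => by rw [hBsig0 t (Finset.filter_subset _ _ ht), sgn_zero])]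
      rw [Finset.sum_const]
      simp
    have hw : wComp H X ℓ C ε =
        ((FullC H X ℓ C).card : ℤ) - (BadC H X ℓ C).card := by
      have := sum_split_TB (H := H) (X := X) (ℓ := ℓ) C ε
      rw [hbad, hfull] at this
      linarith
    have hle : (BadC H X ℓ C).card ≤ (FullC H X ℓ C).card :=
      Finset.card_le_card (Finset.filter_subset _ _)
    constructor
    · rw [hw]
      have : ((BadC H X ℓ C).card : ℤ) ≤ (FullC H X ℓ C).card := by exact_mod_cast hle
      linarith
    · intro hall
      -- no boundary pairs at all: FullC = {0}, BadC = ∅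
      have hnopair : ∀ (x : ↥X) (v : ↥(Xᶜ)), H.Adj ↑x ↑v → cmp H X v = C → False := by
        intro x v ha hc
        exact hOn ⟨x, v, ha, hc, hall x v ha hc⟩
      have hF0 : FullC H X ℓ C = {0} := by
        ext t
        simp only [Finset.mem_singleton]
        constructor
        · intro ht
          obtain ⟨hsupp, hsc⟩ := (Finset.mem_filter.mp ht).2
          funext x v j
          show t x v j = 0
          by_cases ha : H.Adj ↑x ↑v
          · by_cases hc : cmp H X v = C
            · exact absurd (hnopair x v ha hc) not_false
            · exact hsc x v j hc
          · exact hsupp x v j ha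
        · intro ht
          subst ht
          exact Finset.mem_filter.mpr ⟨Finset.mem_univ _, ⟨fun _ _ _ _ => rfl, fun _ _ _ _ => rfl⟩⟩
      have hB0 : BadC H X ℓ C = ∅ := by
        rw [Finset.eq_empty_iff_forall_notMem]
        intro t ht
        obtain ⟨htf, htb⟩ := mem_BadC_iff.mp ht
        rw [hF0, Finset.mem_singleton] at htf
        subst htf
        refine htb ⟨⟨0, hpos⟩, ?_⟩
        unfold dCsum
        refine Finset.sum_eq_zero (fun x _ => Finset.sum_eq_zero (fun v _ => ?_))
        by_cases hc : cmp H X v = C <;> simp [hc]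
      have hw1 : wComp H X ℓ C ε = 1 := by
        rw [hw, hB0, hF0]
        simp
      rw [hw1]
      norm_num

lemma wComp_nonneg (hodd : Odd ℓ) (hpos : 0 < ℓ) (C) (ε : Finset ↥X) :
    0 ≤ wComp H X ℓ C ε := (wComp_cases hodd hpos C ε).1

lemma wComp_pos (hodd : Odd ℓ) (hpos : 0 < ℓ) (C) :
    0 < wComp H X ℓ C univ :=
  (wComp_cases hodd hpos C univ).2 (fun x _ _ _ => Finset.mem_univ x)

variable (H X ℓ) in
/-- B-profiles supported on a set of components, good on each of them -/
noncomputable def Tpart (𝒦 : Finset ((Gout H X).ConnectedComponent)) : Finset (Bspace X ℓ) :=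
  univ.filter (fun t => SuppB H t ∧
    (∀ (x : ↥X) (v : ↥(Xᶜ)) (j : Fin ℓ), cmp H X v ∉ 𝒦 → t x v j = 0) ∧
    (∀ C ∈ 𝒦, ∃ j, dCsum H X t C j = 0))

lemma dCsum_eq_zero_of_supp {t : Bspace X ℓ} {C}
    (h : ∀ x v j, cmp H X v = C → t x v j = 0) (j : Fin ℓ) : dCsum H X t C j = 0 := by
  unfold dCsum
  refine Finset.sum_eq_zero (fun x _ => Finset.sum_eq_zero (fun v _ => ?_))
  by_cases hc : cmp H X v = C
  · rw [if_pos hc, h x v j hc]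
  · rw [if_neg hc]

lemma Tpart_empty : Tpart H X ℓ ∅ = {0} := by
  ext t
  simp only [Finset.mem_singleton, Tpart, Finset.mem_filter, Finset.mem_univ, true_and]
  constructor
  · rintro ⟨_, hz, _⟩
    funext x v j
    exact hz x v j (Finset.notMem_empty _)
  · intro ht
    subst ht
    exact ⟨fun _ _ _ _ => rfl, fun _ _ _ _ => rfl, fun C hC => absurd hC (Finset.notMem_empty _)⟩

lemma Tpart_insert {C} {𝒦 : Finset ((Gout H X).ConnectedComponent)} (hC : C ∉ 𝒦)
    (ε : Finset ↥X) :
    ∑ t ∈ Tpart H X ℓ (insert C 𝒦), sgn (Bsig ε t) =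
      wComp H X ℓ C ε * ∑ t ∈ Tpart H X ℓ 𝒦, sgn (Bsig ε t) := by
  unfold wComp
  rw [Finset.sum_mul_sum, ← Finset.sum_product']
  refine Finset.sum_nbij'
    (i := fun t => ((fun x v j => if cmp H X v = C then t x v j else 0 : Bspace X ℓ),
                    (fun x v j => if cmp H X v ∈ 𝒦 then t x v j else 0 : Bspace X ℓ)))
    (j := fun p => p.1 + p.2) ?_ ?_ ?_ ?_ ?_
  · -- i maps into the product
    intro t ht
    obtain ⟨-, hsupp, hsc, hgood⟩ := Finset.mem_filter.mp ht
    rw [Finset.mem_product]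
    constructor
    · refine Finset.mem_filter.mpr ⟨?_, ?_⟩
      · refine Finset.mem_filter.mpr ⟨Finset.mem_univ _, ⟨?_, ?_⟩⟩
        · intro x v j ha
          show (if cmp H X v = C then t x v j else 0) = 0
          by_cases hc : cmp H X v = C
          · rw [if_pos hc, hsupp x v j ha]
          · rw [if_neg hc]
        · intro x v j hc
          exact if_neg hc
      · obtain ⟨j, hj⟩ := hgood C (Finset.mem_insert_self C 𝒦)
        refine ⟨j, ?_⟩
        rw [dCsum_congr (t' := t) (fun x v j hc => if_pos hc)]
        exact hj
    · refine Finset.mem_filter.mpr ⟨Finset.mem_univ _, ⟨?_, ?_, ?_⟩⟩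
      · intro x v j ha
        show (if cmp H X v ∈ 𝒦 then t x v j else 0) = 0
        by_cases hk : cmp H X v ∈ 𝒦
        · rw [if_pos hk, hsupp x v j ha]
        · rw [if_neg hk]
      · intro x v j hk
        exact if_neg hk
      · intro C' hC'
        obtain ⟨j, hj⟩ := hgood C' (Finset.mem_insert_of_mem hC')
        refine ⟨j, ?_⟩
        rw [dCsum_congr (t' := t) (fun x v j hc => if_pos (hc ▸ hC'))]
        exact hj
  · -- j maps into Tpart (insert C 𝒦)
    intro p hp
    rw [Finset.mem_product] at hp
    obtain ⟨hp1, hp2⟩ := hp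
    obtain ⟨hp1f, j1, hj1⟩ := Finset.mem_filter.mp hp1
    obtain ⟨-, hsupp1, hsc1⟩ := Finset.mem_filter.mp hp1f
    obtain ⟨-, hsupp2, hsc2, hgood2⟩ := Finset.mem_filter.mp hp2
    refine Finset.mem_filter.mpr ⟨Finset.mem_univ _, ⟨?_, ?_, ?_⟩⟩
    · intro x v j ha
      show p.1 x v j + p.2 x v j = 0
      rw [hsupp1 x v j ha, hsupp2 x v j ha, add_zero]
    · intro x v j hk
      show p.1 x v j + p.2 x v j = 0
      have h1 : cmp H X v ≠ C := fun h => hk (h ▸ Finset.mem_insert_self C 𝒦)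
      have h2 : cmp H X v ∉ 𝒦 := fun h => hk (Finset.mem_insert_of_mem h)
      rw [hsc1 x v j h1, hsc2 x v j h2, add_zero]
    · intro C' hC'
      rcases Finset.mem_insert.mp hC' with rfl | hC'k
      · refine ⟨j1, ?_⟩
        have hz : dCsum H X p.2 C' j1 = 0 :=
          dCsum_eq_zero_of_supp (fun x v j hc => hsc2 x v j (hc ▸ hC)) j1
        have : dCsum H X (p.1 + p.2) C' j1 = dCsum H X p.1 C' j1 + dCsum H X p.2 C' j1 :=
          dCsum_add p.1 p.2 C' j1
        rw [this, hz, add_zero]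
        exact hj1
      · obtain ⟨j2, hj2⟩ := hgood2 C' hC'k
        refine ⟨j2, ?_⟩
        have hne : C' ≠ C := fun h => hC (h ▸ hC'k)
        have hz : dCsum H X p.1 C' j2 = 0 :=
          dCsum_eq_zero_of_supp (fun x v j hc => hsc1 x v j (hc ▸ hne)) j2
        have : dCsum H X (p.1 + p.2) C' j2 = dCsum H X p.1 C' j2 + dCsum H X p.2 C' j2 :=
          dCsum_add p.1 p.2 C' j2
        rw [this, hz, zero_add]
        exact hj2
  · -- left inverse
    intro t ht
    obtain ⟨-, hsupp, hsc, hgood⟩ := Finset.mem_filter.mp ht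
    funext x v j
    show (if cmp H X v = C then t x v j else 0) + (if cmp H X v ∈ 𝒦 then t x v j else 0) = t x v j
    by_cases hc : cmp H X v = C
    · rw [if_pos hc, if_neg (hc ▸ hC), add_zero]
    · rw [if_neg hc]
      by_cases hk : cmp H X v ∈ 𝒦
      · rw [if_pos hk, zero_add]
      · rw [if_neg hk, add_zero]
        exact (hsc x v j (fun hmem => (Finset.mem_insert.mp hmem).elim hc hk)).symm
  · -- right inverse
    intro p hp
    rw [Finset.mem_product] at hp
    obtain ⟨hp1, hp2⟩ := hp
    obtain ⟨hp1f, -⟩ := Finset.mem_filter.mp hp1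
    obtain ⟨-, hsupp1, hsc1⟩ := Finset.mem_filter.mp hp1f
    obtain ⟨-, hsupp2, hsc2, hgood2⟩ := Finset.mem_filter.mp hp2
    have h1 : (fun x v j => if cmp H X v = C then (p.1 + p.2) x v j else 0 : Bspace X ℓ) = p.1 := by
      funext x v j
      by_cases hc : cmp H X v = C
      · rw [if_pos hc]
        show p.1 x v j + p.2 x v j = p.1 x v j
        rw [hsc2 x v j (hc ▸ hC), add_zero]
      · rw [if_neg hc, hsc1 x v j hc]
    have h2 : (fun x v j => if cmp H X v ∈ 𝒦 then (p.1 + p.2) x v j else 0 : Bspace X ℓ) = p.2 := by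
      funext x v j
      by_cases hk : cmp H X v ∈ 𝒦
      · rw [if_pos hk]
        show p.1 x v j + p.2 x v j = p.2 x v j
        rw [hsc1 x v j (fun h => hC (h ▸ hk)), zero_add]
      · rw [if_neg hk, hsc2 x v j hk]
    exact Prod.ext h1 h2
  · -- values agree
    intro t ht
    obtain ⟨-, hsupp, hsc, hgood⟩ := Finset.mem_filter.mp ht
    have hdec : t = (fun x v j => if cmp H X v = C then t x v j else 0 : Bspace X ℓ) +
        (fun x v j => if cmp H X v ∈ 𝒦 then t x v j else 0 : Bspace X ℓ) := by
      funext x v j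
      show t x v j = (if cmp H X v = C then t x v j else 0) + (if cmp H X v ∈ 𝒦 then t x v j else 0)
      by_cases hc : cmp H X v = C
      · rw [if_pos hc, if_neg (hc ▸ hC), add_zero]
      · rw [if_neg hc]
        by_cases hk : cmp H X v ∈ 𝒦
        · rw [if_pos hk, zero_add]
        · rw [if_neg hk, add_zero]
          exact hsc x v j (fun hmem => (Finset.mem_insert.mp hmem).elim hc hk)
    conv_lhs => rw [hdec]
    rw [Bsig_add, sgn_add]

lemma Tpart_prod (hodd : Odd ℓ) (hpos : 0 < ℓ) (ε : Finset ↥X)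
    (𝒦 : Finset ((Gout H X).ConnectedComponent)) :
    ∑ t ∈ Tpart H X ℓ 𝒦, sgn (Bsig ε t) = ∏ C ∈ 𝒦, wComp H X ℓ C ε := by
  induction 𝒦 using Finset.induction_on with
  | empty =>
    rw [Tpart_empty, Finset.prod_empty, Finset.sum_singleton, Bsig_zero, sgn_zero]
  | insert _ _ ha ih =>
    rename_i a s
    rw [Tpart_insert ha ε, ih, Finset.prod_insert ha]

variable (H) in
def SuppA (η : Aspace X) : Prop := ∀ x x' : ↥X, ¬ H.Adj ↑x ↑x' → η x x' = 0
def SymA (η : Aspace X) : Prop := ∀ x x' : ↥X, η x x' = η x' x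
noncomputable def parA (η : Aspace X) (x : ↥X) : ZMod 2 := ∑ x', η x x'
noncomputable def Asig (ε : Finset ↥X) (η : Aspace X) : ZMod 2 := ∑ x ∈ ε, parA η x
variable (H X) in
def GoodB (t : Bspace X ℓ) : Prop := ∀ C, ∃ j, dCsum H X t C j = 0

variable (H X) in
noncomputable def Hset : Finset (Aspace X) := univ.filter (fun η => SuppA H η ∧ SymA η)

variable (H X ℓ) in
noncomputable def Tset : Finset (Bspace X ℓ) :=
  univ.filter (fun t => SuppB H t ∧ GoodB H X t)

variable (H X ℓ) in
/-- the coordinate version of the answer set for parity prescription `w` -/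
noncomputable def Aset (w : ↥X → ZMod 2) : Finset (Aspace X × Bspace X ℓ) :=
  univ.filter (fun c => SuppA H c.1 ∧ SymA c.1 ∧ SuppB H c.2 ∧ GoodB H X c.2 ∧
    ∀ x, parA c.1 x + parB c.2 x = w x)

lemma parA_add (η η' : Aspace X) (x : ↥X) : parA (η + η') x = parA η x + parA η' x := by
  unfold parA
  rw [← Finset.sum_add_distrib]
  rfl

lemma Asig_add (ε : Finset ↥X) (η η' : Aspace X) :
    Asig ε (η + η') = Asig ε η + Asig ε η' := by
  unfold Asig
  rw [← Finset.sum_add_distrib]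
  exact Finset.sum_congr rfl (fun x _ => parA_add η η' x)

lemma aspace_add_self (η : Aspace X) : η + η = 0 := by
  funext x x'
  exact zmod2_add_self _

lemma Hset_closed : ∀ a ∈ Hset H X, ∀ b ∈ Hset H X, a + b ∈ Hset H X := by
  intro a ha b hb
  obtain ⟨h1, h2⟩ := (Finset.mem_filter.mp ha).2
  obtain ⟨h1', h2'⟩ := (Finset.mem_filter.mp hb).2
  refine Finset.mem_filter.mpr ⟨Finset.mem_univ _, ⟨?_, ?_⟩⟩
  · intro x x' hne
    show a x x' + b x x' = 0
    rw [h1 x x' hne, h1' x x' hne, add_zero]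
  · intro x x'
    show a x x' + b x x' = a x' x + b x' x
    rw [h2 x x', h2' x x']

lemma eta_nonneg (ε : Finset ↥X) : 0 ≤ ∑ η ∈ Hset H X, sgn (Asig ε η) :=
  char_sum_nonneg _ Hset_closed aspace_add_self (Asig ε) (Asig_add ε)

lemma eta_univ : ∑ η ∈ Hset H X, sgn (Asig univ η) = ((Hset H X).card : ℤ) := by
  have h0 : ∀ η ∈ Hset H X, Asig univ η = 0 := by
    intro η hη
    obtain ⟨h1, h2⟩ := (Finset.mem_filter.mp hη).2
    unfold Asig parA
    exact sym_sum_zero η h2 (fun x => h1 x x (fun h => (H.irrefl h)))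
  rw [Finset.sum_congr rfl (fun η hη => by rw [h0 η hη, sgn_zero])]
  simp

lemma eta_pos : 0 < ∑ η ∈ Hset H X, sgn (Asig univ η) := by
  rw [eta_univ]
  have : (0 : Aspace X) ∈ Hset H X :=
    Finset.mem_filter.mpr ⟨Finset.mem_univ _, ⟨fun _ _ _ => rfl, fun _ _ => rfl⟩⟩
  exact_mod_cast Finset.card_pos.mpr ⟨_, this⟩

lemma Tset_eq_Tpart : Tset H X ℓ = Tpart H X ℓ univ := by
  ext t
  unfold Tset Tpart
  rw [Finset.mem_filter, Finset.mem_filter]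
  constructor
  · rintro ⟨hu, h1, h2⟩
    exact ⟨hu, h1, fun x v j h => absurd (Finset.mem_univ _) h, fun C _ => h2 C⟩
  · rintro ⟨hu, h1, h2, h3⟩
    exact ⟨hu, h1, fun C => h3 C (Finset.mem_univ _)⟩

lemma tpart_nonneg (hodd : Odd ℓ) (hpos : 0 < ℓ) (ε : Finset ↥X) :
    0 ≤ ∑ t ∈ Tset H X ℓ, sgn (Bsig ε t) := by
  rw [Tset_eq_Tpart, Tpart_prod hodd hpos]
  exact Finset.prod_nonneg (fun C _ => wComp_nonneg hodd hpos C ε)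

lemma tpart_pos (hodd : Odd ℓ) (hpos : 0 < ℓ) :
    0 < ∑ t ∈ Tset H X ℓ, sgn (Bsig univ t) := by
  rw [Tset_eq_Tpart, Tpart_prod hodd hpos]
  exact Finset.prod_pos (fun C _ => wComp_pos hodd hpos C)

/-- the factored total weight -/
lemma Wfun_eq (ε : Finset ↥X) :
    ∑ c ∈ (Hset H X) ×ˢ (Tset H X ℓ), sgn (∑ x ∈ ε, (parA c.1 x + parB c.2 x)) =
      (∑ η ∈ Hset H X, sgn (Asig ε η)) * (∑ t ∈ Tset H X ℓ, sgn (Bsig ε t)) := by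
  rw [Finset.sum_mul_sum, ← Finset.sum_product']
  refine Finset.sum_congr rfl (fun c _ => ?_)
  rw [Finset.sum_add_distrib]
  exact sgn_add _ _

lemma Wfun_nonneg (hodd : Odd ℓ) (hpos : 0 < ℓ) (ε : Finset ↥X) :
    0 ≤ ∑ c ∈ (Hset H X) ×ˢ (Tset H X ℓ), sgn (∑ x ∈ ε, (parA c.1 x + parB c.2 x)) := by
  rw [Wfun_eq]
  exact mul_nonneg (eta_nonneg ε) (tpart_nonneg hodd hpos ε)

lemma Wfun_pos (hodd : Odd ℓ) (hpos : 0 < ℓ) :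
    0 < ∑ c ∈ (Hset H X) ×ˢ (Tset H X ℓ), sgn (∑ x ∈ univ, (parA c.1 x + parB c.2 x)) := by
  rw [Wfun_eq]
  exact mul_pos eta_pos (tpart_pos hodd hpos)

theorem count_lt (x₁ : ↥X) (hodd : Odd ℓ) (hpos : 0 < ℓ)
    (w₁ : ↥X → ZMod 2) (hw1 : w₁ x₁ = 1) (hw0 : ∀ x, x ≠ x₁ → w₁ x = 0)
    (w₀ : ↥X → ZMod 2) (hwz : ∀ x, w₀ x = 0) :
    (Aset H X ℓ w₁).card < (Aset H X ℓ w₀).card := by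
  classical
  set par : (Aspace X × Bspace X ℓ) → ↥X → ZMod 2 :=
    fun c x => parA c.1 x + parB c.2 x with hpar
  set SSG : Finset (Aspace X × Bspace X ℓ) := (Hset H X) ×ˢ (Tset H X ℓ) with hSSG
  have hAset : ∀ w, Aset H X ℓ w = SSG.filter (fun c => ∀ x, par c x = w x) := by
    intro w
    ext c
    simp only [Aset, Finset.mem_filter, Finset.mem_univ, true_and, hSSG,
      Finset.mem_product, Hset, Tset, hpar]
    tauto
  set P' : Finset (Aspace X × Bspace X ℓ) :=
    SSG.filter (fun c => ∀ x, x ≠ x₁ → par c x = 0) with hP'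
  have hA0 : Aset H X ℓ w₀ = P'.filter (fun c => par c x₁ = 0) := by
    rw [hAset, hP', Finset.filter_filter]
    refine Finset.filter_congr (fun c _ => ?_)
    constructor
    · intro h
      exact ⟨fun x _ => (h x).trans (hwz x), (h x₁).trans (hwz x₁)⟩
    · rintro ⟨h1, h2⟩ x
      rw [hwz x]
      by_cases hx : x = x₁
      · rw [hx]; exact h2
      · exact h1 x hx
  have hA1 : Aset H X ℓ w₁ =
      P'.filter (fun c => par c x₁ = 1) := by
    rw [hAset, hP', Finset.filter_filter]
    refine Finset.filter_congr (fun c _ => ?_)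
    constructor
    · intro h
      refine ⟨fun x hx => ?_, ?_⟩
      · have := h x; rwa [hw0 x hx] at this
      · have := h x₁; rwa [hw1] at this
    · rintro ⟨h1, h2⟩ x
      by_cases hx : x = x₁
      · rw [hx, hw1]; exact h2
      · rw [hw0 x hx]; exact h1 x hx
  -- difference as signed sum
  have hD : ∑ c ∈ P', sgn (par c x₁) =
      ((Aset H X ℓ w₀).card : ℤ) - (Aset H X ℓ w₁).card := by
    rw [← Finset.sum_filter_add_sum_filter_not P' (fun c => par c x₁ = 0)]
    have hpos' : ∑ c ∈ P'.filter (fun c => par c x₁ = 0), sgn (par c x₁) =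
        ((Aset H X ℓ w₀).card : ℤ) := by
      rw [Finset.sum_congr rfl (fun c hc => by
        rw [(Finset.mem_filter.mp hc).2, sgn_zero])]
      rw [hA0]
      simp
    have hneg' : ∑ c ∈ P'.filter (fun c => ¬ par c x₁ = 0), sgn (par c x₁) =
        -((Aset H X ℓ w₁).card : ℤ) := by
      have hff : P'.filter (fun c => ¬ par c x₁ = 0) = P'.filter (fun c => par c x₁ = 1) := by
        refine Finset.filter_congr (fun c _ => ?_)
        constructor
        · exact fun h => zmod2_ne_zero h
        · intro h h0; rw [h0] at h; exact absurd h (by decide)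
      rw [hff]
      rw [Finset.sum_congr rfl (fun c hc => by
        rw [(Finset.mem_filter.mp hc).2, sgn_one])]
      rw [hA1]
      simp
    rw [hpos', hneg']
    ring
  -- expansion
  set E : Finset ↥X := univ.erase x₁ with hE
  set k : ℕ := E.card with hk
  have hx₁E : x₁ ∉ E := Finset.notMem_erase x₁ univ
  have hexp : (2:ℤ)^k * (∑ c ∈ P', sgn (par c x₁)) =
      ∑ c ∈ SSG, sgn (par c x₁) * ∏ x ∈ E, (1 + sgn (par c x)) := by
    rw [← Finset.sum_filter_add_sum_filter_not SSG (fun c => ∀ x, x ≠ x₁ → par c x = 0)]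
    have h1 : ∑ c ∈ SSG.filter (fun c => ∀ x, x ≠ x₁ → par c x = 0),
        sgn (par c x₁) * ∏ x ∈ E, (1 + sgn (par c x)) =
        ∑ c ∈ P', sgn (par c x₁) * 2^k := by
      refine Finset.sum_congr rfl (fun c hc => ?_)
      have hcc := (Finset.mem_filter.mp hc).2
      have : ∏ x ∈ E, (1 + sgn (par c x)) = 2^k := by
        rw [Finset.prod_congr rfl (fun x hx => by
          rw [hcc x (Finset.mem_erase.mp hx).1])]
        rw [Finset.prod_const]
        norm_num [sgn_zero]
        exact hk.symm
      rw [this]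
    have h2 : ∑ c ∈ SSG.filter (fun c => ¬ ∀ x, x ≠ x₁ → par c x = 0),
        sgn (par c x₁) * ∏ x ∈ E, (1 + sgn (par c x)) = 0 := by
      refine Finset.sum_eq_zero (fun c hc => ?_)
      have hcc := (Finset.mem_filter.mp hc).2
      push_neg at hcc
      obtain ⟨x, hxne, hxnz⟩ := hcc
      have hx1 : par c x = 1 := zmod2_ne_zero hxnz
      have : ∏ x ∈ E, (1 + sgn (par c x)) = 0 := by
        refine Finset.prod_eq_zero (Finset.mem_erase.mpr ⟨hxne, Finset.mem_univ _⟩) ?_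
        rw [hx1, sgn_one]
        norm_num
      rw [this, mul_zero]
    rw [h1, h2, add_zero]
    rw [← Finset.sum_mul, mul_comm]
  -- expand the product into subsets
  have hsub : ∀ c ∈ SSG, sgn (par c x₁) * ∏ x ∈ E, (1 + sgn (par c x)) =
      ∑ t ∈ E.powerset, sgn (∑ x ∈ insert x₁ (E \ t), par c x) := by
    intro c _
    rw [Finset.prod_add, Finset.mul_sum]
    refine Finset.sum_congr rfl (fun t ht => ?_)
    rw [Finset.prod_const_one, one_mul]
    have hx₁t : x₁ ∉ E \ t := fun h => hx₁E (Finset.mem_sdiff.mp h).1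
    conv_rhs => rw [Finset.sum_insert hx₁t, sgn_add, sgn_sum]
  have hswap : ∑ c ∈ SSG, sgn (par c x₁) * ∏ x ∈ E, (1 + sgn (par c x)) =
      ∑ t ∈ E.powerset, ∑ c ∈ SSG, sgn (∑ x ∈ insert x₁ (E \ t), par c x) := by
    rw [Finset.sum_congr rfl hsub, Finset.sum_comm]
  have hterm : ∀ t ∈ E.powerset, 0 ≤ ∑ c ∈ SSG, sgn (∑ x ∈ insert x₁ (E \ t), par c x) := by
    intro t _
    simp only [hSSG, hpar]
    exact Wfun_nonneg hodd hpos _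
  have hpos0 : 0 < ∑ c ∈ SSG, sgn (∑ x ∈ insert x₁ (E \ ∅), par c x) := by
    have hins : insert x₁ (E \ ∅) = univ := by
      rw [Finset.sdiff_empty, hE, Finset.insert_erase (Finset.mem_univ x₁)]
    rw [hins]
    simp only [hSSG, hpar]
    exact Wfun_pos hodd hpos
  have hsumpos : 0 < ∑ t ∈ E.powerset, ∑ c ∈ SSG, sgn (∑ x ∈ insert x₁ (E \ t), par c x) :=
    Finset.sum_pos' hterm ⟨∅, Finset.empty_mem_powerset E, hpos0⟩
  have hprodpos : (0:ℤ) < 2^k * (∑ c ∈ P', sgn (par c x₁)) := by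
    rw [hexp, hswap]
    exact hsumpos
  have hDpos : 0 < ∑ c ∈ P', sgn (par c x₁) := by
    by_contra hD0
    push_neg at hD0
    have h2k : (0:ℤ) < 2^k := by positivity
    nlinarith
  rw [hD] at hDpos
  have := sub_pos.mp hDpos
  exact_mod_cast this


-- ===================== Part I : transfer =====================

variable (H X ℓ) in
noncomputable def coordsOf {W : Set (↥X ⊕ (↥(Xᶜ) × Fin ℓ))}
    (a : ↥X → CFIVert (copyGraph H X ℓ) W) : Aspace X × Bspace X ℓ :=
  (fun x x' => if Sum.inl x' ∈ (a x).1.2 then 1 else 0,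
   fun x v j => if Sum.inr (v, j) ∈ (a x).1.2 then 1 else 0)

lemma F_adj_inl_inl {x x' : ↥X} :
    (copyGraph H X ℓ).Adj (Sum.inl x) (Sum.inl x') ↔ H.Adj ↑x ↑x' := by
  constructor
  · exact fun h => h.1
  · intro h
    exact ⟨h, fun i j hi => by simp [copyIdx] at hi⟩

lemma F_adj_inl_inr {x : ↥X} {v : ↥(Xᶜ)} {j : Fin ℓ} :
    (copyGraph H X ℓ).Adj (Sum.inl x) (Sum.inr (v, j)) ↔ H.Adj ↑x ↑v := by
  constructor
  · exact fun h => h.1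
  · intro h
    exact ⟨h, fun i j' hi => by simp [copyIdx] at hi⟩

lemma F_adj_inr_inr {u v : ↥(Xᶜ)} {i j : Fin ℓ} :
    (copyGraph H X ℓ).Adj (Sum.inr (u, i)) (Sum.inr (v, j)) ↔ H.Adj ↑u ↑v ∧ i = j := by
  constructor
  · intro h
    exact ⟨h.1, h.2 i j rfl rfl⟩
  · intro ⟨h1, h2⟩
    refine ⟨h1, fun i' j' hi hj => ?_⟩
    simp only [copyIdx, Option.some.injEq] at hi hj
    rw [← hi, ← hj]; exact h2

lemma ncard_split (S : Set (↥X ⊕ (↥(Xᶜ) × Fin ℓ))) :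
    ((S.ncard : ZMod 2)) = (∑ x' : ↥X, if Sum.inl x' ∈ S then 1 else 0) +
      ∑ v : ↥(Xᶜ), ∑ j : Fin ℓ, if Sum.inr (v,j) ∈ S then (1:ZMod 2) else 0 := by
  rw [ncard_cast_eq_sum, Fintype.sum_sum_type]
  congr 1
  rw [Fintype.sum_prod_type]

lemma cast_of_parity {n : ℕ} {P : Prop} (h : P ↔ Odd n) :
    ((n : ZMod 2)) = if P then 1 else 0 := by
  by_cases hP : P
  · rw [if_pos hP]
    exact (natCast_zmod2_eq_one_iff n).mpr (h.mp hP)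
  · rw [if_neg hP]
    refine (natCast_zmod2_eq_zero_iff n).mpr (fun ho => hP (h.mpr ho))

lemma parity_of_cast {n : ℕ} {P : Prop} (h : (n : ZMod 2) = if P then 1 else 0) :
    P ↔ Odd n := by
  by_cases hP : P
  · rw [if_pos hP] at h
    simp [hP, (natCast_zmod2_eq_one_iff n).mp h]
  · rw [if_neg hP] at h
    constructor
    · intro hp; exact absurd hp hP
    · intro ho
      rw [(natCast_zmod2_eq_one_iff n).mpr ho] at h
      exact absurd h one_ne_zero

/-- forward direction of the characterization -/
lemma answers_pin {W : Set (↥X ⊕ (↥(Xᶜ) × Fin ℓ))}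
    {a : ↥X → CFIVert (copyGraph H X ℓ) W} (ha : a ∈ cpAnsCFI H X ℓ W) :
    ∀ x : ↥X, (a x).1.1 = Sum.inl x := by
  obtain ⟨h, hγ, hax⟩ := ha
  intro x
  rw [← hax x]
  have := hγ ↑x
  rcases hp : (h ↑x).1.1 with x' | ⟨v, i⟩
  · rw [hp] at this
    have h2 : (↑x' : V) = ↑x := this
    exact congrArg Sum.inl (Subtype.ext h2)
  · rw [hp] at this
    have h2 : (↑v : V) = ↑x := this
    exact absurd (h2 ▸ x.2) v.2

lemma answers_mem {W : Set (↥X ⊕ (↥(Xᶜ) × Fin ℓ))} (hW : ∀ p, Sum.inr p ∉ W)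
    {a : ↥X → CFIVert (copyGraph H X ℓ) W} (ha : a ∈ cpAnsCFI H X ℓ W) :
    coordsOf H X ℓ a ∈ Aset H X ℓ (fun x => if Sum.inl x ∈ W then 1 else 0) := by
  have hpin := answers_pin ha
  obtain ⟨h, hγ, hax⟩ := ha
  -- pinning on the outside
  have hpout : ∀ v : ↥(Xᶜ), ∃ i, (h ↑v).1.1 = Sum.inr (v, i) := by
    intro v
    have := hγ ↑v
    rcases hp : (h ↑v).1.1 with x' | ⟨u, i⟩
    · rw [hp] at this
      have h2 : (↑x' : V) = ↑v := this
      exact absurd (h2 ▸ x'.2) v.2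
    · rw [hp] at this
      have h2 : (↑u : V) = ↑v := this
      exact ⟨i, congrArg (fun z => Sum.inr (z, i)) (Subtype.ext h2)⟩
  choose idx hidx using hpout
  have hpinh : ∀ x : ↥X, (h ↑x).1.1 = Sum.inl x := by
    intro x; rw [hax x]; exact hpin x
  -- index constancy
  have hidx_adj : ∀ u v : ↥(Xᶜ), H.Adj ↑u ↑v → idx u = idx v := by
    intro u v huv
    have hadj := h.map_adj huv
    have h2 := hadj.1
    rw [hidx u, hidx v] at h2
    exact (F_adj_inr_inr.mp h2).2
  have hwalk : ∀ (u v : ↥(Xᶜ)), (Gout H X).Walk u v → idx u = idx v := by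
    intro u v w
    induction w with
    | nil => rfl
    | cons hadj p ih => exact (hidx_adj _ _ hadj).trans ih
  have hidx_comp : ∀ u v : ↥(Xᶜ), cmp H X u = cmp H X v → idx u = idx v := by
    intro u v hc
    exact hwalk u v (SimpleGraph.ConnectedComponent.exact hc).some
  -- local parity sums
  have hparity : ∀ u : V, (((h u).1.2.ncard : ZMod 2)) =
      if (h u).1.1 ∈ W then 1 else 0 := by
    intro u
    exact cast_of_parity (h u).2.2
  -- subset conditions
  have hsub : ∀ u : V, (h u).1.2 ⊆ (copyGraph H X ℓ).neighborSet (h u).1.1 := fun u => (h u).2.1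
  refine Finset.mem_filter.mpr ⟨Finset.mem_univ _, ⟨?_, ?_, ?_, ?_, ?_⟩⟩
  · -- SuppA
    intro x x' hne
    show (if Sum.inl x' ∈ (a x).1.2 then (1:ZMod 2) else 0) = 0
    rw [if_neg]
    intro hmem
    rw [← hax x] at hmem
    have := hsub ↑x hmem
    rw [SimpleGraph.mem_neighborSet, hpinh x] at this
    exact hne (F_adj_inl_inl.mp this)
  · -- SymA
    intro x x'
    show (if Sum.inl x' ∈ (a x).1.2 then (1:ZMod 2) else 0) =
      (if Sum.inl x ∈ (a x').1.2 then 1 else 0)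
    rw [← hax x, ← hax x']
    by_cases hadj : H.Adj ↑x ↑x'
    · have hcfi := h.map_adj hadj
      have h2 := hcfi.2
      rw [hpinh x, hpinh x'] at h2
      by_cases hm : Sum.inl x' ∈ (h ↑x).1.2
      · rw [if_pos hm, if_pos (h2.mp hm)]
      · rw [if_neg hm, if_neg (fun hm2 => hm (h2.mpr hm2))]
    · rw [if_neg, if_neg]
      · intro hmem
        have := hsub ↑x' hmem
        rw [SimpleGraph.mem_neighborSet, hpinh x'] at this
        exact hadj (F_adj_inl_inl.mp this).symm
      · intro hmem
        have := hsub ↑x hmem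
        rw [SimpleGraph.mem_neighborSet, hpinh x] at this
        exact hadj (F_adj_inl_inl.mp this)
  · -- SuppB
    intro x v j hne
    show (if Sum.inr (v, j) ∈ (a x).1.2 then (1:ZMod 2) else 0) = 0
    rw [if_neg]
    intro hmem
    rw [← hax x] at hmem
    have := hsub ↑x hmem
    rw [SimpleGraph.mem_neighborSet, hpinh x] at this
    exact hne (F_adj_inl_inr.mp this)
  · -- GoodB
    intro C
    obtain ⟨v₀, hv₀⟩ := C.exists_rep
    refine ⟨idx v₀, ?_⟩
    have hidxC : ∀ v : ↥(Xᶜ), cmp H X v = C → idx v = idx v₀ := by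
      intro v hv
      exact hidx_comp v v₀ (by rw [hv, ← hv₀]; rfl)
    -- rewrite the summand
    have hstep1 : ∀ (x : ↥X) (v : ↥(Xᶜ)),
        (if cmp H X v = C then (if Sum.inr (v, idx v₀) ∈ (a x).1.2 then (1:ZMod 2) else 0) else 0)
        = (if cmp H X v = C then (if Sum.inl x ∈ (h ↑v).1.2 then (1:ZMod 2) else 0) else 0) := by
      intro x v
      by_cases hv : cmp H X v = C
      · rw [if_pos hv, if_pos hv, ← hax x, ← hidxC v hv]
        by_cases hadj : H.Adj ↑x ↑v
        · have h2 := (h.map_adj hadj).2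
          rw [hpinh x, hidx v] at h2
          exact if_congr h2 rfl rfl
        · rw [if_neg, if_neg]
          · intro hmem
            have := hsub ↑v hmem
            rw [SimpleGraph.mem_neighborSet, hidx v] at this
            have h3 := (copyGraph H X ℓ).adj_symm this
            exact hadj (F_adj_inl_inr.mp h3)
          · intro hmem
            have := hsub ↑x hmem
            rw [SimpleGraph.mem_neighborSet, hpinh x] at this
            exact hadj (F_adj_inl_inr.mp this)
      · rw [if_neg hv, if_neg hv]
    show dCsum H X (coordsOf H X ℓ a).2 C (idx v₀) = 0
    unfold dCsum coordsOf
    rw [Finset.sum_congr rfl (fun x (_ : x ∈ univ) =>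
      Finset.sum_congr rfl (fun v (_ : v ∈ univ) => hstep1 x v))]
    rw [Finset.sum_comm]
    set M : ↥(Xᶜ) → ↥(Xᶜ) → ZMod 2 := fun v u =>
      if cmp H X v = C then (if Sum.inr (u, idx v) ∈ (h ↑v).1.2 then 1 else 0) else 0 with hM
    have hstep2 : ∀ v : ↥(Xᶜ), (∑ x : ↥X, if cmp H X v = C then
        (if Sum.inl x ∈ (h ↑v).1.2 then (1:ZMod 2) else 0) else 0) = ∑ u : ↥(Xᶜ), M v u := by
      intro v
      by_cases hv : cmp H X v = C
      · rw [Finset.sum_congr rfl (fun x (_ : x ∈ univ) => if_pos hv)]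
        have hMv : ∀ u, M v u = if Sum.inr (u, idx v) ∈ (h ↑v).1.2 then (1:ZMod 2) else 0 := by
          intro u; rw [hM]; exact if_pos hv
        rw [Finset.sum_congr rfl (fun u (_ : u ∈ univ) => hMv u)]
        have hps := ncard_split (X := X) (ℓ := ℓ) ((h ↑v).1.2)
        have hzero : ((((h ↑v).1.2.ncard : ℕ) : ZMod 2)) = 0 := by
          rw [hparity ↑v, hidx v]
          exact if_neg (hW _)
        have zmod2_cancel : ∀ A B : ZMod 2, A + B = 0 → A = B := by decide
        have hA_eq := zmod2_cancel _ _ (hps.symm.trans hzero)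
        rw [hA_eq]
        refine Finset.sum_congr rfl (fun u _ => ?_)
        refine Finset.sum_eq_single_of_mem (idx v) (Finset.mem_univ _) ?_
        intro j' _ hne
        rw [if_neg]
        intro hmem
        have := hsub ↑v hmem
        rw [SimpleGraph.mem_neighborSet, hidx v] at this
        exact hne (F_adj_inr_inr.mp this).2.symm
      · rw [Finset.sum_congr rfl (fun x (_ : x ∈ univ) => if_neg hv)]
        have hMv : ∀ u, M v u = 0 := by
          intro u; rw [hM]; exact if_neg hv
        rw [Finset.sum_congr rfl (fun u (_ : u ∈ univ) => hMv u)]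
        simp
    rw [Finset.sum_congr rfl (fun v (_ : v ∈ univ) => hstep2 v)]
    refine sym_sum_zero M ?_ ?_
    · -- symmetry
      intro v u
      by_cases hadj : H.Adj ↑v ↑u
      · have hadj' : (Gout H X).Adj v u := hadj
        have hcm : cmp H X v = cmp H X u :=
          SimpleGraph.ConnectedComponent.sound hadj'.reachable
        have hie : idx v = idx u := hidx_adj v u hadj
        have h2 := (h.map_adj hadj).2
        rw [hidx v, hidx u] at h2
        rw [hM]
        show (if cmp H X v = C then (if Sum.inr (u, idx v) ∈ (h ↑v).1.2 then (1:ZMod 2) else 0) else 0)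
          = (if cmp H X u = C then (if Sum.inr (v, idx u) ∈ (h ↑u).1.2 then (1:ZMod 2) else 0) else 0)
        rw [hcm, hie]
        rw [hie] at h2
        exact if_congr Iff.rfl (if_congr h2 rfl rfl) rfl
      · rw [hM]
        show (if cmp H X v = C then (if Sum.inr (u, idx v) ∈ (h ↑v).1.2 then (1:ZMod 2) else 0) else 0)
          = (if cmp H X u = C then (if Sum.inr (v, idx u) ∈ (h ↑u).1.2 then (1:ZMod 2) else 0) else 0)
        have hz1 : (if Sum.inr (u, idx v) ∈ (h ↑v).1.2 then (1:ZMod 2) else 0) = 0 := by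
          rw [if_neg]
          intro hmem
          have := hsub ↑v hmem
          rw [SimpleGraph.mem_neighborSet, hidx v] at this
          exact hadj (F_adj_inr_inr.mp this).1
        have hz2 : (if Sum.inr (v, idx u) ∈ (h ↑u).1.2 then (1:ZMod 2) else 0) = 0 := by
          rw [if_neg]
          intro hmem
          have := hsub ↑u hmem
          rw [SimpleGraph.mem_neighborSet, hidx u] at this
          exact hadj ((F_adj_inr_inr.mp this).1).symm
        rw [hz1, hz2]
        simp
    · -- diagonal
      intro v
      rw [hM]
      show (if cmp H X v = C then (if Sum.inr (v, idx v) ∈ (h ↑v).1.2 then (1:ZMod 2) else 0) else 0) = 0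
      have hz : (if Sum.inr (v, idx v) ∈ (h ↑v).1.2 then (1:ZMod 2) else 0) = 0 := by
        rw [if_neg]
        intro hmem
        have := hsub ↑v hmem
        rw [SimpleGraph.mem_neighborSet, hidx v] at this
        exact (copyGraph H X ℓ).irrefl this
      rw [hz]
      simp
  · -- parity
    intro x
    show (∑ x', if Sum.inl x' ∈ (a x).1.2 then (1:ZMod 2) else 0) +
      (∑ v, ∑ j, if Sum.inr (v,j) ∈ (a x).1.2 then (1:ZMod 2) else 0) =
      (if Sum.inl x ∈ W then 1 else 0)
    rw [← ncard_split, ← hax x, hparity ↑x, hpinh x]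


lemma ite_one_zero_inj {P Q : Prop} (h : (if P then (1:ZMod 2) else 0) = if Q then 1 else 0) :
    P ↔ Q := by
  by_cases hP : P <;> by_cases hQ : Q
  · exact iff_of_true hP hQ
  · rw [if_pos hP, if_neg hQ] at h; exact absurd h (by decide)
  · rw [if_neg hP, if_pos hQ] at h; exact absurd h (by decide)
  · exact iff_of_false hP hQ

lemma zmod2_ite_eq (b : ZMod 2) : (if b = 1 then (1:ZMod 2) else 0) = b := by
  rcases zmod2_cases b with h | h
  · rw [h, if_neg (by decide)]
  · rw [h, if_pos rfl]

lemma coords_injOn {W : Set (↥X ⊕ (↥(Xᶜ) × Fin ℓ))} :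
    Set.InjOn (coordsOf H X ℓ) (cpAnsCFI H X ℓ W) := by
  intro a ha a' ha' heq
  have hpin := answers_pin ha
  have hpin' := answers_pin ha'
  funext x
  have h1 : (a x).1.1 = (a' x).1.1 := by rw [hpin x, hpin' x]
  have h2 : (a x).1.2 = (a' x).1.2 := by
    ext z
    rcases z with x' | ⟨v, j⟩
    · exact ite_one_zero_inj (congrFun (congrFun (congrArg Prod.fst heq) x) x')
    · exact ite_one_zero_inj
        (congrFun (congrFun (congrFun (congrArg Prod.snd heq) x) v) j)
  exact Subtype.ext (Prod.ext h1 h2)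

lemma answers_surj {W : Set (↥X ⊕ (↥(Xᶜ) × Fin ℓ))} (hW : ∀ p, Sum.inr p ∉ W)
    {c : Aspace X × Bspace X ℓ}
    (hc : c ∈ Aset H X ℓ (fun x => if Sum.inl x ∈ W then 1 else 0)) :
    ∃ a ∈ cpAnsCFI H X ℓ W, coordsOf H X ℓ a = c := by
  obtain ⟨η, t⟩ := c
  obtain ⟨-, hSuppA, hSymA, hSuppB, hGoodB, hPar⟩ := Finset.mem_filter.mp hc
  dsimp only at hSuppA hSymA hSuppB hGoodB hPar
  choose jC hjC using hGoodB
  set idx : ↥(Xᶜ) → Fin ℓ := fun v => jC (cmp H X v) with hidxdef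
  have hidxc : ∀ u v' : ↥(Xᶜ), cmp H X u = cmp H X v' → idx u = idx v' := by
    intro u v' hcmp
    show jC (cmp H X u) = jC (cmp H X v')
    rw [hcmp]
  set r : ↥(Xᶜ) → ZMod 2 := fun v => ∑ x : ↥X, t x v (idx v) with hrdef
  have hrcomp : ∀ C : (Gout H X).ConnectedComponent,
      ∑ v ∈ univ.filter (fun v => (Gout H X).connectedComponentMk v = C), r v = 0 := by
    intro C
    have h1 : ∑ v ∈ univ.filter (fun v => (Gout H X).connectedComponentMk v = C), r v =
        ∑ v ∈ univ.filter (fun v => (Gout H X).connectedComponentMk v = C),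
          ∑ x : ↥X, t x v (jC C) := by
      refine Finset.sum_congr rfl (fun v hv => ?_)
      have hcv : cmp H X v = C := (Finset.mem_filter.mp hv).2
      show ∑ x : ↥X, t x v (jC (cmp H X v)) = ∑ x : ↥X, t x v (jC C)
      rw [hcv]
    rw [h1, Finset.sum_filter]
    have h2 : ∑ v : ↥(Xᶜ), (if (Gout H X).connectedComponentMk v = C then
        ∑ x : ↥X, t x v (jC C) else 0) = ∑ v : ↥(Xᶜ), ∑ x : ↥X,
        (if cmp H X v = C then t x v (jC C) else 0) := by
      refine Finset.sum_congr rfl (fun v _ => ?_)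
      by_cases hcv : cmp H X v = C
      · rw [if_pos hcv]
        exact Finset.sum_congr rfl (fun x _ => (if_pos hcv).symm)
      · rw [if_neg hcv]
        exact (Finset.sum_eq_zero (fun x _ => if_neg hcv)).symm
    rw [h2, Finset.sum_comm]
    exact hjC C
  obtain ⟨ε, hεsym, hεsupp, hεrow⟩ := exists_eps (Gout H X) r hrcomp
  -- profiles
  set SxF : ↥X → Set (↥X ⊕ (↥(Xᶜ) × Fin ℓ)) := fun x =>
    {z | (∃ x', z = Sum.inl x' ∧ η x x' = 1) ∨ (∃ v j, z = Sum.inr (v, j) ∧ t x v j = 1)}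
    with hSxF
  set SvF : ↥(Xᶜ) → Set (↥X ⊕ (↥(Xᶜ) × Fin ℓ)) := fun v =>
    {z | (∃ x, z = Sum.inl x ∧ t x v (idx v) = 1) ∨ (∃ u, z = Sum.inr (u, idx u) ∧ ε v u = 1)}
    with hSvF
  have hSx_inl : ∀ (x x' : ↥X), (Sum.inl x' ∈ SxF x ↔ η x x' = 1) := by
    intro x x'
    constructor
    · rintro (⟨x'', heq, hh⟩ | ⟨v, j, heq, hh⟩)
      · rw [Sum.inl.injEq] at heq
        rw [heq]; exact hh
      · exact absurd heq (by simp)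
    · intro hh
      exact Or.inl ⟨x', rfl, hh⟩
  have hSx_inr : ∀ (x : ↥X) (v : ↥(Xᶜ)) (j : Fin ℓ),
      (Sum.inr (v, j) ∈ SxF x ↔ t x v j = 1) := by
    intro x v j
    constructor
    · rintro (⟨x'', heq, hh⟩ | ⟨v', j', heq, hh⟩)
      · exact absurd heq (by simp)
      · rw [Sum.inr.injEq, Prod.mk.injEq] at heq
        rw [heq.1, heq.2]; exact hh
    · intro hh
      exact Or.inr ⟨v, j, rfl, hh⟩
  have hSv_inl : ∀ (v : ↥(Xᶜ)) (x : ↥X), (Sum.inl x ∈ SvF v ↔ t x v (idx v) = 1) := by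
    intro v x
    constructor
    · rintro (⟨x'', heq, hh⟩ | ⟨u, heq, hh⟩)
      · rw [Sum.inl.injEq] at heq
        rw [heq]; exact hh
      · exact absurd heq (by simp)
    · intro hh
      exact Or.inl ⟨x, rfl, hh⟩
  have hSv_inr : ∀ (v u : ↥(Xᶜ)) (j : Fin ℓ),
      (Sum.inr (u, j) ∈ SvF v ↔ (j = idx u ∧ ε v u = 1)) := by
    intro v u j
    constructor
    · rintro (⟨x'', heq, hh⟩ | ⟨u', heq, hh⟩)
      · exact absurd heq (by simp)
      · rw [Sum.inr.injEq, Prod.mk.injEq] at heq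
        obtain ⟨h1, h2⟩ := heq
        subst h1
        exact ⟨h2, hh⟩
    · rintro ⟨h1, h2⟩
      exact Or.inr ⟨u, by rw [h1], h2⟩
  -- CFIVert properties
  have hSxsub : ∀ x : ↥X, SxF x ⊆ (copyGraph H X ℓ).neighborSet (Sum.inl x) := by
    rintro x z (⟨x', rfl, hh⟩ | ⟨v, j, rfl, hh⟩)
    · refine F_adj_inl_inl.mpr ?_
      by_contra hne
      rw [hSuppA x x' hne] at hh
      exact zero_ne_one hh
    · refine F_adj_inl_inr.mpr ?_
      by_contra hne
      rw [hSuppB x v j hne] at hh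
      exact zero_ne_one hh
  have hSxpar : ∀ x : ↥X, (Sum.inl x ∈ W ↔ Odd (SxF x).ncard) := by
    intro x
    refine parity_of_cast ?_
    rw [ncard_split]
    simp only [hSx_inl, hSx_inr, zmod2_ite_eq]
    exact hPar x
  have hSvsub : ∀ v : ↥(Xᶜ), SvF v ⊆
      (copyGraph H X ℓ).neighborSet (Sum.inr (v, idx v)) := by
    rintro v z (⟨x, rfl, hh⟩ | ⟨u, rfl, hh⟩)
    · have hadj : H.Adj ↑x ↑v := by
        by_contra hne
        rw [hSuppB x v (idx v) hne] at hh
        exact zero_ne_one hh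
      exact (copyGraph H X ℓ).adj_symm (F_adj_inl_inr.mpr hadj)
    · have hne : ε v u ≠ 0 := by rw [hh]; decide
      have hadj' : (Gout H X).Adj v u := hεsupp v u hne
      have hcm : cmp H X v = cmp H X u :=
        SimpleGraph.ConnectedComponent.sound hadj'.reachable
      exact F_adj_inr_inr.mpr ⟨hadj', (hidxc v u hcm).symm ▸ rfl⟩
  have hSvpar : ∀ v : ↥(Xᶜ), (Sum.inr (v, idx v) ∈ W ↔ Odd (SvF v).ncard) := by
    intro v
    refine parity_of_cast ?_
    rw [ncard_split, if_neg (hW _)]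
    simp only [hSv_inl, hSv_inr, zmod2_ite_eq, ite_and]
    have hcol : ∀ u : ↥(Xᶜ), (∑ j : Fin ℓ, if j = idx u then ε v u else 0) = ε v u := by
      intro u
      rw [Finset.sum_ite_eq' univ (idx u) (fun _ => ε v u), if_pos (Finset.mem_univ _)]
    rw [Finset.sum_congr rfl (fun u (_ : u ∈ univ) => hcol u), hεrow v]
    exact zmod2_add_self (r v)
  -- the homomorphism
  set hhom : V → CFIVert (copyGraph H X ℓ) W := fun u =>
    if hu : u ∈ X then ⟨(Sum.inl ⟨u, hu⟩, SxF ⟨u, hu⟩), hSxsub _, hSxpar _⟩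
    else ⟨(Sum.inr (⟨u, (Set.mem_compl_iff X u).mpr hu⟩,
        idx ⟨u, (Set.mem_compl_iff X u).mpr hu⟩), SvF ⟨u, (Set.mem_compl_iff X u).mpr hu⟩),
      hSvsub _, hSvpar _⟩ with hhomdef
  have hhomX : ∀ x : ↥X, hhom ↑x = ⟨(Sum.inl x, SxF x), hSxsub x, hSxpar x⟩ := by
    intro x
    rw [hhomdef]
    exact dif_pos x.2
  have hhomY : ∀ v : ↥(Xᶜ), hhom ↑v = ⟨(Sum.inr (v, idx v), SvF v), hSvsub v, hSvpar v⟩ := by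
    intro v
    rw [hhomdef]
    have hv : (↑v : V) ∉ X := v.2
    exact dif_neg hv
  have hmadj : ∀ {u w : V}, H.Adj u w → (CFI (copyGraph H X ℓ) W).Adj (hhom u) (hhom w) := by
    intro u w huw
    by_cases hu : u ∈ X <;> by_cases hw : w ∈ X
    · rw [hhomX ⟨u, hu⟩, hhomX ⟨w, hw⟩]
      refine ⟨F_adj_inl_inl.mpr huw, ?_⟩
      show Sum.inl ⟨w, hw⟩ ∈ SxF ⟨u, hu⟩ ↔ Sum.inl ⟨u, hu⟩ ∈ SxF ⟨w, hw⟩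
      rw [hSx_inl, hSx_inl, hSymA ⟨u, hu⟩ ⟨w, hw⟩]
    · rw [hhomX ⟨u, hu⟩, hhomY ⟨w, (Set.mem_compl_iff X w).mpr hw⟩]
      refine ⟨F_adj_inl_inr.mpr huw, ?_⟩
      show Sum.inr (⟨w, _⟩, idx ⟨w, _⟩) ∈ SxF ⟨u, hu⟩ ↔ Sum.inl ⟨u, hu⟩ ∈ SvF ⟨w, _⟩
      rw [hSx_inr, hSv_inl]
    · rw [hhomY ⟨u, (Set.mem_compl_iff X u).mpr hu⟩, hhomX ⟨w, hw⟩]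
      refine ⟨(copyGraph H X ℓ).adj_symm (F_adj_inl_inr.mpr huw.symm), ?_⟩
      show Sum.inl ⟨w, hw⟩ ∈ SvF ⟨u, _⟩ ↔ Sum.inr (⟨u, _⟩, idx ⟨u, _⟩) ∈ SxF ⟨w, hw⟩
      rw [hSv_inl, hSx_inr]
    · rw [hhomY ⟨u, (Set.mem_compl_iff X u).mpr hu⟩, hhomY ⟨w, (Set.mem_compl_iff X w).mpr hw⟩]
      have hadj' : (Gout H X).Adj ⟨u, (Set.mem_compl_iff X u).mpr hu⟩
          ⟨w, (Set.mem_compl_iff X w).mpr hw⟩ := huw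
      have hcm : cmp H X ⟨u, (Set.mem_compl_iff X u).mpr hu⟩ =
          cmp H X ⟨w, (Set.mem_compl_iff X w).mpr hw⟩ :=
        SimpleGraph.ConnectedComponent.sound hadj'.reachable
      refine ⟨F_adj_inr_inr.mpr ⟨huw, hidxc _ _ hcm⟩, ?_⟩
      show Sum.inr (⟨w, _⟩, idx ⟨w, _⟩) ∈ SvF ⟨u, _⟩ ↔
        Sum.inr (⟨u, _⟩, idx ⟨u, _⟩) ∈ SvF ⟨w, _⟩
      rw [hSv_inr, hSv_inr]
      constructor
      · rintro ⟨-, hh⟩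
        exact ⟨rfl, by rw [← hεsym]; exact hh⟩
      · rintro ⟨-, hh⟩
        exact ⟨rfl, by rw [hεsym]; exact hh⟩
  set a : ↥X → CFIVert (copyGraph H X ℓ) W :=
    fun x => ⟨(Sum.inl x, SxF x), hSxsub x, hSxpar x⟩ with hadef
  refine ⟨a, ⟨⟨hhom, fun {u w} h => hmadj h⟩, ?_, ?_⟩, ?_⟩
  · intro v
    show gammaMap X ℓ (hhom v).1.1 = v
    by_cases hv : v ∈ X
    · rw [hhomX ⟨v, hv⟩]
      rfl
    · rw [hhomY ⟨v, (Set.mem_compl_iff X v).mpr hv⟩]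
      rfl
  · intro x
    show hhom ↑x = a x
    rw [hhomX x, hadef]
  · show coordsOf H X ℓ a = (η, t)
    unfold coordsOf
    refine Prod.ext ?_ ?_
    · funext x x'
      simp only [hadef]
      simp only [hSx_inl, zmod2_ite_eq]
    · funext x v j
      simp only [hadef]
      simp only [hSx_inr, zmod2_ite_eq]


lemma transfer {W : Set (↥X ⊕ (↥(Xᶜ) × Fin ℓ))} (hW : ∀ p, Sum.inr p ∉ W) :
    Nat.card ↥(cpAnsCFI H X ℓ W) =
      (Aset H X ℓ (fun x => if Sum.inl x ∈ W then 1 else 0)).card := by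
  rw [Nat.card_coe_set_eq]
  rw [← Set.ncard_image_of_injOn (coords_injOn (H := H) (X := X) (ℓ := ℓ) (W := W))]
  have himg : coordsOf H X ℓ '' (cpAnsCFI H X ℓ W) =
      ↑(Aset H X ℓ (fun x => if Sum.inl x ∈ W then 1 else 0)) := by
    ext c
    constructor
    · rintro ⟨a, ha, rfl⟩
      exact Finset.mem_coe.mpr (answers_mem hW ha)
    · intro hcmem
      obtain ⟨a, ha, heq⟩ := answers_surj hW (Finset.mem_coe.mp hcmem)
      exact ⟨a, ha, heq⟩
  rw [himg, Set.ncard_coe_finset]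


end main
end S18

/-- Let `(H,X)` be a conjunctive query with `∅ ⊊ X ⊊ V(H)`, `H`
connected, and `x₁ ∈ X` adjacent to some vertex outside `X`.  Let `ℓ` be an odd
positive integer, `F = F_ℓ(H,X)` and `c = γ ∘ π₁`.  Then
`|cpAns((H,X),(χ(F,∅),c))| > |cpAns((H,X),(χ(F,{x₁}),c))|`. -/
theorem stmt18 {V : Type*} [Fintype V] [DecidableEq V]
    (H : SimpleGraph V) (hconn : H.Connected)
    (X : Set V) (hne : X.Nonempty) (hproper : X ≠ Set.univ)
    (x₁ : V) (hx₁ : x₁ ∈ X) (y : V) (hy : y ∉ X) (hadj : H.Adj x₁ y)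
    (ℓ : ℕ) (hodd : Odd ℓ) (hpos : 0 < ℓ) :
    Nat.card ↥(cpAnsCFI H X ℓ (∅ : Set (↥X ⊕ (↥(Xᶜ) × Fin ℓ)))) >
      Nat.card ↥(cpAnsCFI H X ℓ {Sum.inl ⟨x₁, hx₁⟩}) := by
  classical
  have h0 : ∀ p : ↥(Xᶜ) × Fin ℓ, Sum.inr p ∉ (∅ : Set (↥X ⊕ (↥(Xᶜ) × Fin ℓ))) :=
    fun p => Set.notMem_empty _
  have h1 : ∀ p : ↥(Xᶜ) × Fin ℓ,
      Sum.inr p ∉ ({Sum.inl ⟨x₁, hx₁⟩} : Set (↥X ⊕ (↥(Xᶜ) × Fin ℓ))) := by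
    intro p hmem
    have := Set.mem_singleton_iff.mp hmem
    exact absurd this (by simp)
  rw [S18.transfer h0, S18.transfer h1]
  refine S18.count_lt ⟨x₁, hx₁⟩ hodd hpos _ ?_ ?_ _ ?_
  · rw [if_pos]
    exact Set.mem_singleton _
  · intro x hx'
    rw [if_neg]
    intro hmem
    have h2 := Set.mem_singleton_iff.mp hmem
    rw [Sum.inl.injEq] at h2
    exact hx' h2
  · intro x
    rw [if_neg (Set.notMem_empty _)]
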